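/- arXiv:1303.1714 — 6 statements merged into one kernel-verified Lean document; each statement's English description precedes it below -/
import Mathlib

section
/- For real numbers κ₁, κ₂, κ₃, κ₄ each ≥ 1, let p₁ = (κ₁+κ₂+κ₃+κ₄)/4, p₂ = (Σ_{i<j} κᵢκⱼ)/6, p₃ = (Σ_{i<j<k} κᵢκⱼκₖ)/4, p₄ = κ₁κ₂κ₃κ₄. Then 3(p₂p₄ − p₃²) + (p₁p₃ − p₄) ≤ 0. -/
theorem stmt0 (a b c d : ℝ) (ha : 1 ≤ a) (hb : 1 ≤ b) (hc : 1 ≤ c) (hd : 1 ≤ d) :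
    3 * (((a*b + a*c + a*d + b*c + b*d + c*d) / 6) * (a*b*c*d) - ((a*b*c + a*b*d + a*c*d + b*c*d) / 4)^2)
      + ((a + b + c + d) / 4) * ((a*b*c + a*b*d + a*c*d + b*c*d) / 4) - (a*b*c*d) ≤ 0 := by
  obtain ⟨x, hx, rfl⟩ : ∃ x, 0 ≤ x ∧ a = 1 + x := ⟨a - 1, by linarith, by ring⟩
  obtain ⟨y, hy, rfl⟩ : ∃ y, 0 ≤ y ∧ b = 1 + y := ⟨b - 1, by linarith, by ring⟩
  obtain ⟨z, hz, rfl⟩ : ∃ z, 0 ≤ z ∧ c = 1 + z := ⟨c - 1, by linarith, by ring⟩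
  obtain ⟨w, hw, rfl⟩ : ∃ w, 0 ≤ w ∧ d = 1 + w := ⟨d - 1, by linarith, by ring⟩
  have key : 16 * (3 * ((((1+x)*(1+y) + (1+x)*(1+z) + (1+x)*(1+w) + (1+y)*(1+z) + (1+y)*(1+w) + (1+z)*(1+w)) / 6) * ((1+x)*(1+y)*(1+z)*(1+w)) - (((1+x)*(1+y)*(1+z) + (1+x)*(1+y)*(1+w) + (1+x)*(1+z)*(1+w) + (1+y)*(1+z)*(1+w)) / 4)^2)
      + (((1+x) + (1+y) + (1+z) + (1+w)) / 4) * (((1+x)*(1+y)*(1+z) + (1+x)*(1+y)*(1+w) + (1+x)*(1+z)*(1+w) + (1+y)*(1+z)*(1+w)) / 4) - ((1+x)*(1+y)*(1+z)*(1+w)))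
      = -(x*(y-z)^2 + x*(y-w)^2 + x*(z-w)^2 + y*(x-z)^2 + y*(x-w)^2 + y*(z-w)^2 + z*(x-y)^2 + z*(x-w)^2 + z*(y-w)^2 + w*(x-y)^2 + w*(x-z)^2 + w*(y-z)^2 + 4*(x*y-z*w)^2 + 4*(x*z-y*w)^2 + 4*(x*w-y*z)^2 + x*y*(z-w)^2 + x*z*(y-w)^2 + x*w*(y-z)^2 + y*z*(x-w)^2 + y*w*(x-z)^2 + z*w*(x-y)^2 + 2*y*(x*(z-w))^2 + 2*z*(x*(y-w))^2 + 2*w*(x*(y-z))^2 + 2*x*(y*(z-w))^2 + 2*z*(y*(x-w))^2 + 2*w*(y*(x-z))^2 + 2*x*(z*(y-w))^2 + 2*y*(z*(x-w))^2 + 2*w*(z*(x-y))^2 + 2*x*(w*(y-z))^2 + 2*y*(w*(x-z))^2 + 2*z*(w*(x-y))^2 + (x*y*(z-w))^2 + (x*z*(y-w))^2 + (x*w*(y-z))^2 + (y*z*(x-w))^2 + (y*w*(x-z))^2 + (z*w*(x-y))^2) := by ring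
  linarith [mul_nonneg hx (sq_nonneg (y-z)),
    mul_nonneg hx (sq_nonneg (y-w)),
    mul_nonneg hx (sq_nonneg (z-w)),
    mul_nonneg hy (sq_nonneg (x-z)),
    mul_nonneg hy (sq_nonneg (x-w)),
    mul_nonneg hy (sq_nonneg (z-w)),
    mul_nonneg hz (sq_nonneg (x-y)),
    mul_nonneg hz (sq_nonneg (x-w)),
    mul_nonneg hz (sq_nonneg (y-w)),
    mul_nonneg hw (sq_nonneg (x-y)),
    mul_nonneg hw (sq_nonneg (x-z)),
    mul_nonneg hw (sq_nonneg (y-z)),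
    sq_nonneg (x*y-z*w),
    sq_nonneg (x*z-y*w),
    sq_nonneg (x*w-y*z),
    mul_nonneg (mul_nonneg hx hy) (sq_nonneg (z-w)),
    mul_nonneg (mul_nonneg hx hz) (sq_nonneg (y-w)),
    mul_nonneg (mul_nonneg hx hw) (sq_nonneg (y-z)),
    mul_nonneg (mul_nonneg hy hz) (sq_nonneg (x-w)),
    mul_nonneg (mul_nonneg hy hw) (sq_nonneg (x-z)),
    mul_nonneg (mul_nonneg hz hw) (sq_nonneg (x-y)),
    mul_nonneg hy (sq_nonneg (x*(z-w))),
    mul_nonneg hz (sq_nonneg (x*(y-w))),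
    mul_nonneg hw (sq_nonneg (x*(y-z))),
    mul_nonneg hx (sq_nonneg (y*(z-w))),
    mul_nonneg hz (sq_nonneg (y*(x-w))),
    mul_nonneg hw (sq_nonneg (y*(x-z))),
    mul_nonneg hx (sq_nonneg (z*(y-w))),
    mul_nonneg hy (sq_nonneg (z*(x-w))),
    mul_nonneg hw (sq_nonneg (z*(x-y))),
    mul_nonneg hx (sq_nonneg (w*(y-z))),
    mul_nonneg hy (sq_nonneg (w*(x-z))),
    mul_nonneg hz (sq_nonneg (w*(x-y))),
    sq_nonneg (x*y*(z-w)),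
    sq_nonneg (x*z*(y-w)),
    sq_nonneg (x*w*(y-z)),
    sq_nonneg (y*z*(x-w)),
    sq_nonneg (y*w*(x-z)),
    sq_nonneg (z*w*(x-y))]
end

section
/- For four real numbers κ₁, κ₂, κ₃, κ₄, one has the identity 16·(3(p₂p₄−p₃²) + p₁p₃ − p₄) = Σ_{cyc} κᵢκⱼ(1 − κᵢκⱼ)(κₖ − κₗ)², the cyclic sum being over the six unordered pairs {i,j} with {k,l} the complementary pair. In particular if κᵢκⱼ ≥ 1 for all i ≠ j, then 3(p₂p₄−p₃²) + p₁p₃ − p₄ ≤ 0. -/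
theorem stmt4 (a b c d : ℝ) :
    (16 * (3 * (((a*b + a*c + a*d + b*c + b*d + c*d) / 6) * (a*b*c*d) - ((a*b*c + a*b*d + a*c*d + b*c*d) / 4)^2)
        + ((a + b + c + d) / 4) * ((a*b*c + a*b*d + a*c*d + b*c*d) / 4) - (a*b*c*d)) =
      a * b * (1 - a * b) * (c - d)^2 + a * c * (1 - a * c) * (b - d)^2 + a * d * (1 - a * d) * (b - c)^2 + b * c * (1 - b * c) * (a - d)^2 + b * d * (1 - b * d) * (a - c)^2 + c * d * (1 - c * d) * (a - b)^2) ∧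
    ((1 ≤ a * b ∧ 1 ≤ a * c ∧ 1 ≤ a * d ∧ 1 ≤ b * c ∧ 1 ≤ b * d ∧ 1 ≤ c * d) →
      3 * (((a*b + a*c + a*d + b*c + b*d + c*d) / 6) * (a*b*c*d) - ((a*b*c + a*b*d + a*c*d + b*c*d) / 4)^2)
        + ((a + b + c + d) / 4) * ((a*b*c + a*b*d + a*c*d + b*c*d) / 4) - (a*b*c*d) ≤ 0) := by
  have hid : (16 * (3 * (((a*b + a*c + a*d + b*c + b*d + c*d) / 6) * (a*b*c*d) - ((a*b*c + a*b*d + a*c*d + b*c*d) / 4)^2)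
        + ((a + b + c + d) / 4) * ((a*b*c + a*b*d + a*c*d + b*c*d) / 4) - (a*b*c*d)) =
      a * b * (1 - a * b) * (c - d)^2 + a * c * (1 - a * c) * (b - d)^2 + a * d * (1 - a * d) * (b - c)^2 + b * c * (1 - b * c) * (a - d)^2 + b * d * (1 - b * d) * (a - c)^2 + c * d * (1 - c * d) * (a - b)^2) := by
    ring
  refine ⟨hid, fun ⟨h1, h2, h3, h4, h5, h6⟩ => ?_⟩
  have t1 : a * b * (1 - a * b) * (c - d)^2 ≤ 0 :=
    mul_nonpos_of_nonpos_of_nonneg (mul_nonpos_of_nonneg_of_nonpos (by linarith) (by linarith)) (sq_nonneg _)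
  have t2 : a * c * (1 - a * c) * (b - d)^2 ≤ 0 :=
    mul_nonpos_of_nonpos_of_nonneg (mul_nonpos_of_nonneg_of_nonpos (by linarith) (by linarith)) (sq_nonneg _)
  have t3 : a * d * (1 - a * d) * (b - c)^2 ≤ 0 :=
    mul_nonpos_of_nonpos_of_nonneg (mul_nonpos_of_nonneg_of_nonpos (by linarith) (by linarith)) (sq_nonneg _)
  have t4 : b * c * (1 - b * c) * (a - d)^2 ≤ 0 :=
    mul_nonpos_of_nonpos_of_nonneg (mul_nonpos_of_nonneg_of_nonpos (by linarith) (by linarith)) (sq_nonneg _)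
  have t5 : b * d * (1 - b * d) * (a - c)^2 ≤ 0 :=
    mul_nonpos_of_nonpos_of_nonneg (mul_nonpos_of_nonneg_of_nonpos (by linarith) (by linarith)) (sq_nonneg _)
  have t6 : c * d * (1 - c * d) * (a - b)^2 ≤ 0 :=
    mul_nonpos_of_nonpos_of_nonneg (mul_nonpos_of_nonneg_of_nonpos (by linarith) (by linarith)) (sq_nonneg _)
  nlinarith [hid]
end

section
/- For five real numbers κ₁,…,κ₅ each ≥ 1, one has 100·(3(p₅p₃−p₄²) + p₁p₃ − p₄) = Σ_{cyc} [κᵢκⱼ + κⱼκₖ + κᵢκₖ − 3(κᵢκⱼκₖ)²](κₗ − κₘ)² ≤ 0, where each summand has distinct indices {i,j,k,l,m} = {1,…,5}. -/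
lemma coef_nonpos (x y z : ℝ) (hx : 1 ≤ x) (hy : 1 ≤ y) (hz : 1 ≤ z) :
    x * y + y * z + x * z - 3 * (x * y * z)^2 ≤ 0 := by
  nlinarith [mul_le_mul hx hy (by linarith) (by linarith : (0:ℝ) ≤ x),
    mul_le_mul hy hz (by linarith) (by linarith : (0:ℝ) ≤ y),
    mul_le_mul hx hz (by linarith) (by linarith : (0:ℝ) ≤ x),
    sq_nonneg (x*y*z - 1), sq_nonneg (x*y - 1), sq_nonneg (y*z-1), sq_nonneg (x*z-1),
    mul_pos (mul_pos (by linarith : (0:ℝ)<x) (by linarith : (0:ℝ)<y)) (by linarith : (0:ℝ)<z)]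

theorem stmt7 (a b c d e : ℝ) (ha : 1 ≤ a) (hb : 1 ≤ b) (hc : 1 ≤ c) (hd : 1 ≤ d)
    (he : 1 ≤ e) :
    100 * (3 * ((a*b*c*d*e) * ((a*b*c + a*b*d + a*b*e + a*c*d + a*c*e + a*d*e + b*c*d + b*c*e + b*d*e + c*d*e) / 10) - ((a*b*c*d + a*b*c*e + a*b*d*e + a*c*d*e + b*c*d*e) / 5)^2)
        + ((a + b + c + d + e) / 5) * ((a*b*c + a*b*d + a*b*e + a*c*d + a*c*e + a*d*e + b*c*d + b*c*e + b*d*e + c*d*e) / 10) - (a*b*c*d + a*b*c*e + a*b*d*e + a*c*d*e + b*c*d*e) / 5) =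
      (c * d + d * e + c * e - 3 * (c * d * e)^2) * (a - b)^2 + (b * d + d * e + b * e - 3 * (b * d * e)^2) * (a - c)^2 + (b * c + c * e + b * e - 3 * (b * c * e)^2) * (a - d)^2 + (b * c + c * d + b * d - 3 * (b * c * d)^2) * (a - e)^2 + (a * d + d * e + a * e - 3 * (a * d * e)^2) * (b - c)^2 + (a * c + c * e + a * e - 3 * (a * c * e)^2) * (b - d)^2 + (a * c + c * d + a * d - 3 * (a * c * d)^2) * (b - e)^2 + (a * b + b * e + a * e - 3 * (a * b * e)^2) * (c - d)^2 + (a * b + b * d + a * d - 3 * (a * b * d)^2) * (c - e)^2 + (a * b + b * c + a * c - 3 * (a * b * c)^2) * (d - e)^2 ∧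
    (c * d + d * e + c * e - 3 * (c * d * e)^2) * (a - b)^2 + (b * d + d * e + b * e - 3 * (b * d * e)^2) * (a - c)^2 + (b * c + c * e + b * e - 3 * (b * c * e)^2) * (a - d)^2 + (b * c + c * d + b * d - 3 * (b * c * d)^2) * (a - e)^2 + (a * d + d * e + a * e - 3 * (a * d * e)^2) * (b - c)^2 + (a * c + c * e + a * e - 3 * (a * c * e)^2) * (b - d)^2 + (a * c + c * d + a * d - 3 * (a * c * d)^2) * (b - e)^2 + (a * b + b * e + a * e - 3 * (a * b * e)^2) * (c - d)^2 + (a * b + b * d + a * d - 3 * (a * b * d)^2) * (c - e)^2 + (a * b + b * c + a * c - 3 * (a * b * c)^2) * (d - e)^2 ≤ 0 := by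
  constructor
  · ring
  · have h1 := mul_nonpos_of_nonpos_of_nonneg (coef_nonpos c d e hc hd he) (sq_nonneg (a-b))
    have h2 := mul_nonpos_of_nonpos_of_nonneg (coef_nonpos b d e hb hd he) (sq_nonneg (a-c))
    have h3 := mul_nonpos_of_nonpos_of_nonneg (coef_nonpos b c e hb hc he) (sq_nonneg (a-d))
    have h4 := mul_nonpos_of_nonpos_of_nonneg (coef_nonpos b c d hb hc hd) (sq_nonneg (a-e))
    have h5 := mul_nonpos_of_nonpos_of_nonneg (coef_nonpos a d e ha hd he) (sq_nonneg (b-c))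
    have h6 := mul_nonpos_of_nonpos_of_nonneg (coef_nonpos a c e ha hc he) (sq_nonneg (b-d))
    have h7 := mul_nonpos_of_nonpos_of_nonneg (coef_nonpos a c d ha hc hd) (sq_nonneg (b-e))
    have h8 := mul_nonpos_of_nonpos_of_nonneg (coef_nonpos a b e ha hb he) (sq_nonneg (c-d))
    have h9 := mul_nonpos_of_nonpos_of_nonneg (coef_nonpos a b d ha hb hd) (sq_nonneg (c-e))
    have h10 := mul_nonpos_of_nonpos_of_nonneg (coef_nonpos a b c ha hb hc) (sq_nonneg (d-e))
    linarith
end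

section
/- Let n ≥ 6 and let κ = (κ₁,…,κ_{n−1}) ∈ ℝ^{n−1} with each κᵢ ≥ 1. Writing σ_k = σ_k(κ) for the elementary symmetric polynomials (which are all positive), the following refined Newton–MacLaurin inequality holds: (5σ₅σ₃/σ₄ − 4(n−5)/(n−4)·σ₄) + ((n−4)(n−5)/6)·(4(n−3)/(n−4)·σ₂ − 3σ₃²/σ₄) + ((n−2)(n−3)(n−4)(n−5)/24)·(σ₁σ₃/σ₄ − 4(n−1)/(n−4)) ≤ 0. -/
noncomputable def esymm (n k : ℕ) (f : Fin n → ℝ) : ℝ :=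
  ∑ s ∈ Finset.powersetCard k Finset.univ, ∏ i ∈ s, f i

open Finset

noncomputable def MM (m : ℕ) (x : Fin m → ℝ) (a b : ℕ) : ℝ :=
  ∑ A ∈ Finset.powersetCard a (Finset.univ : Finset (Fin m)),
    ∑ B ∈ Finset.powersetCard b (Finset.univ \ A),
      (∏ i ∈ A, x i) ^ 2 * ∏ i ∈ B, x i

lemma MM_nonneg (m : ℕ) (x : Fin m → ℝ) (hx : ∀ i, 0 ≤ x i) (a b : ℕ) :
    0 ≤ MM m x a b := by
  refine Finset.sum_nonneg fun A _ => Finset.sum_nonneg fun B _ => ?_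
  exact mul_nonneg (sq_nonneg _) (Finset.prod_nonneg fun i _ => hx i)

lemma esymm_eq_MM_zero (m : ℕ) (x : Fin m → ℝ) (k : ℕ) :
    esymm m k x = MM m x 0 k := by
  simp [MM, esymm, Finset.powersetCard_zero]

lemma esymm_zero (m : ℕ) (x : Fin m → ℝ) : esymm m 0 x = 1 := by
  simp [esymm, Finset.powersetCard_zero]

lemma esymm_shift (m : ℕ) (x : Fin m → ℝ) (k : ℕ) :
    esymm m k (fun i => x i + 1)
      = ∑ i ∈ Finset.range (k+1), ((m - i).choose (k - i) : ℝ) * esymm m i x := by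
  have h1 : esymm m k (fun i => x i + 1)
      = ∑ s ∈ powersetCard k (univ : Finset (Fin m)), ∑ t ∈ s.powerset, ∏ i ∈ t, x i := by
    refine Finset.sum_congr rfl fun s _ => ?_
    rw [Finset.prod_add]
    simp
  have h2 : ∀ i ∈ Finset.range (k+1), ((m - i).choose (k - i) : ℝ) * esymm m i x
      = ∑ t ∈ powersetCard i (univ : Finset (Fin m)),
          ∑ v ∈ powersetCard (k-i) (univ \ t), ∏ l ∈ t, x l := by
    intro i _
    rw [esymm, Finset.mul_sum]
    refine Finset.sum_congr rfl fun t ht => ?_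
    rw [Finset.sum_const, card_powersetCard]
    have hc : (univ \ t).card = m - i := by
      rw [Finset.card_sdiff_of_subset (subset_univ t)]
      rw [(Finset.mem_powersetCard.mp ht).2, Finset.card_univ, Fintype.card_fin]
    rw [hc, nsmul_eq_mul, mul_comm]
  rw [h1, Finset.sum_congr rfl h2]
  simp only [Finset.sum_sigma']
  refine Finset.sum_nbij' (fun p => ⟨p.2.card, p.2, p.1 \ p.2⟩)
    (fun q => ⟨q.2.1 ∪ q.2.2, q.2.1⟩) ?_ ?_ ?_ ?_ ?_
  · rintro ⟨s, t⟩ hp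
    simp only [Finset.mem_sigma, Finset.mem_powersetCard, Finset.mem_powerset,
      Finset.mem_range] at hp ⊢
    obtain ⟨⟨hsu, hsc⟩, hts⟩ := hp
    have htc : t.card ≤ k := hsc ▸ Finset.card_le_card hts
    exact ⟨by omega, ⟨subset_univ t, trivial⟩,
      Finset.sdiff_subset_sdiff hsu (le_refl t), by rw [Finset.card_sdiff_of_subset hts, hsc]⟩
  · rintro ⟨i, t, v⟩ hq
    simp only [Finset.mem_sigma, Finset.mem_powersetCard, Finset.mem_powerset,
      Finset.mem_range] at hq ⊢
    obtain ⟨hi, ⟨htu, htc⟩, hvu, hvc⟩ := hq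
    have hdisj : Disjoint t v :=
      Finset.disjoint_left.mpr fun a hat hav => (Finset.mem_sdiff.mp (hvu hav)).2 hat
    exact ⟨⟨subset_univ _, by rw [Finset.card_union_of_disjoint hdisj, htc, hvc]; omega⟩,
      Finset.subset_union_left⟩
  · rintro ⟨s, t⟩ hp
    simp only [Finset.mem_sigma, Finset.mem_powersetCard, Finset.mem_powerset] at hp
    have h : t ∪ s \ t = s := Finset.union_sdiff_of_subset hp.2
    simp [h]
  · rintro ⟨i, t, v⟩ hq
    simp only [Finset.mem_sigma, Finset.mem_powersetCard, Finset.mem_powerset,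
      Finset.mem_range] at hq
    obtain ⟨hi, ⟨htu, htc⟩, hvu, hvc⟩ := hq
    have hdisj : Disjoint t v :=
      Finset.disjoint_left.mpr fun a hat hav => (Finset.mem_sdiff.mp (hvu hav)).2 hat
    have h1 : (t ∪ v) \ t = v := Finset.union_sdiff_cancel_left hdisj
    subst htc
    simp [h1]
  · rintro ⟨s, t⟩ _
    rfl

lemma esymm_mul (m : ℕ) (x : Fin m → ℝ) (i j : ℕ) (hij : i ≤ j) :
    esymm m i x * esymm m j x
      = ∑ a ∈ Finset.range (i+1),
          ((i + j - 2*a).choose (i - a) : ℝ) * MM m x a (i + j - 2*a) := by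
  have h2 : ∀ a ∈ Finset.range (i+1),
      ((i + j - 2*a).choose (i - a) : ℝ) * MM m x a (i + j - 2*a)
      = ∑ A ∈ powersetCard a (univ : Finset (Fin m)),
          ∑ B ∈ powersetCard (i + j - 2*a) (univ \ A),
            ∑ u ∈ powersetCard (i - a) B,
              (∏ l ∈ A, x l) ^ 2 * ∏ l ∈ B, x l := by
    intro a _
    rw [MM, Finset.mul_sum]
    refine Finset.sum_congr rfl fun A _ => ?_
    rw [Finset.mul_sum]
    refine Finset.sum_congr rfl fun B hB => ?_
    rw [Finset.sum_const, card_powersetCard, (Finset.mem_powersetCard.mp hB).2,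
      nsmul_eq_mul, mul_comm]
  rw [esymm, esymm, Finset.sum_mul_sum, Finset.sum_congr rfl h2]
  simp only [Finset.sum_sigma']
  refine Finset.sum_nbij'
    (fun p => ⟨(p.1 ∩ p.2).card, p.1 ∩ p.2, (p.1 ∪ p.2) \ (p.1 ∩ p.2), p.1 \ p.2⟩)
    (fun q => ⟨q.2.1 ∪ q.2.2.2, q.2.1 ∪ (q.2.2.1 \ q.2.2.2)⟩) ?_ ?_ ?_ ?_ ?_
  · rintro ⟨S, T⟩ hp
    simp only [Finset.mem_sigma, Finset.mem_powersetCard, Finset.mem_range] at hp ⊢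
    obtain ⟨⟨hSu, hSc⟩, hTu, hTc⟩ := hp
    have hac : (S ∩ T).card ≤ i := by
      rw [← hSc]; exact Finset.card_le_card Finset.inter_subset_left
    have hcui : (S ∪ T).card + (S ∩ T).card = i + j := by
      rw [Finset.card_union_add_card_inter, hSc, hTc]
    have hsd : (S \ T).card + (S ∩ T).card = i := by
      rw [Finset.card_sdiff_add_card_inter, hSc]
    have hBc : ((S ∪ T) \ (S ∩ T)).card = i + j - 2 * (S ∩ T).card := by
      rw [Finset.card_sdiff_of_subset Finset.inter_subset_union]; omega
    refine ⟨by omega, ⟨subset_univ _, trivial⟩,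
      ⟨Finset.sdiff_subset_sdiff (Finset.union_subset hSu hTu) (le_refl _), hBc⟩, ?_, by omega⟩
    intro z hz
    simp only [Finset.mem_sdiff, Finset.mem_union, Finset.mem_inter] at hz ⊢
    tauto
  · rintro ⟨a, A, B, u⟩ hq
    simp only [Finset.mem_sigma, Finset.mem_powersetCard, Finset.mem_range] at hq ⊢
    obtain ⟨ha, ⟨hAu, hAc⟩, ⟨hBu, hBc⟩, huB, huc⟩ := hq
    have hAB : ∀ z ∈ B, z ∉ A := fun z hz => (Finset.mem_sdiff.mp (hBu hz)).2
    have hdAu : Disjoint A u :=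
      Finset.disjoint_right.mpr fun z hz => hAB z (huB hz)
    have hdABu : Disjoint A (B \ u) :=
      Finset.disjoint_right.mpr fun z hz => hAB z (Finset.mem_sdiff.mp hz).1
    constructor
    · refine ⟨subset_univ _, ?_⟩
      rw [Finset.card_union_of_disjoint hdAu, hAc, huc]; omega
    · refine ⟨subset_univ _, ?_⟩
      rw [Finset.card_union_of_disjoint hdABu, hAc, Finset.card_sdiff_of_subset huB, hBc, huc]; omega
  · rintro ⟨S, T⟩ hp
    have e1 : (S ∩ T) ∪ (S \ T) = S := by
      ext z; simp only [Finset.mem_union, Finset.mem_inter, Finset.mem_sdiff]; tauto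
    have e2 : ((S ∪ T) \ (S ∩ T)) \ (S \ T) = T \ S := by
      ext z; simp only [Finset.mem_sdiff, Finset.mem_union, Finset.mem_inter]; tauto
    have e3 : (S ∩ T) ∪ (T \ S) = T := by
      ext z; simp only [Finset.mem_union, Finset.mem_inter, Finset.mem_sdiff]; tauto
    simp only [e2, e1, e3]
  · rintro ⟨a, A, B, u⟩ hq
    simp only [Finset.mem_sigma, Finset.mem_powersetCard, Finset.mem_range] at hq
    obtain ⟨ha, ⟨hAu, hAc⟩, ⟨hBu, hBc⟩, huB, huc⟩ := hq
    have hAB : ∀ z ∈ B, z ∉ A := fun z hz => (Finset.mem_sdiff.mp (hBu hz)).2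
    have e1 : (A ∪ u) ∩ (A ∪ (B \ u)) = A := by
      ext z
      have h1 : z ∈ B → z ∉ A := hAB z
      have h2 : z ∈ u → z ∈ B := fun h => huB h
      simp only [Finset.mem_inter, Finset.mem_union, Finset.mem_sdiff]
      tauto
    have e2 : ((A ∪ u) ∪ (A ∪ (B \ u))) \ A = B := by
      ext z
      have h1 : z ∈ B → z ∉ A := hAB z
      have h2 : z ∈ u → z ∈ B := fun h => huB h
      simp only [Finset.mem_sdiff, Finset.mem_union]
      tauto
    have e3 : (A ∪ u) \ (A ∪ (B \ u)) = u := by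
      ext z
      have h1 : z ∈ B → z ∉ A := hAB z
      have h2 : z ∈ u → z ∈ B := fun h => huB h
      simp only [Finset.mem_sdiff, Finset.mem_union, not_or]
      tauto
    simp only [e1, e2, e3, hAc]
  · rintro ⟨S, T⟩ hp
    simp only [Finset.mem_sigma, Finset.mem_powersetCard] at hp
    obtain ⟨⟨hSu, hSc⟩, hTu, hTc⟩ := hp
    have e1 : (S ∩ T) ∪ (S \ T) = S := by
      ext z; simp only [Finset.mem_union, Finset.mem_inter, Finset.mem_sdiff]; tauto
    have e3 : (S ∩ T) ∪ (T \ S) = T := by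
      ext z; simp only [Finset.mem_union, Finset.mem_inter, Finset.mem_sdiff]; tauto
    have e4 : (S ∪ T) \ (S ∩ T) = (S \ T) ∪ (T \ S) := by
      ext z; simp only [Finset.mem_sdiff, Finset.mem_union, Finset.mem_inter]; tauto
    have d1 : Disjoint (S ∩ T) (S \ T) := Finset.disjoint_left.mpr fun z hz hz' =>
      (Finset.mem_sdiff.mp hz').2 (Finset.mem_inter.mp hz).2
    have d2 : Disjoint (S ∩ T) (T \ S) := Finset.disjoint_left.mpr fun z hz hz' =>
      (Finset.mem_sdiff.mp hz').2 (Finset.mem_inter.mp hz).1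
    have d3 : Disjoint (S \ T) (T \ S) := Finset.disjoint_left.mpr fun z hz hz' =>
      (Finset.mem_sdiff.mp hz').2 (Finset.mem_sdiff.mp hz).1
    have pS : ∏ l ∈ S, x l = (∏ l ∈ S ∩ T, x l) * ∏ l ∈ S \ T, x l := by
      rw [← Finset.prod_union d1, e1]
    have pT : ∏ l ∈ T, x l = (∏ l ∈ S ∩ T, x l) * ∏ l ∈ T \ S, x l := by
      rw [← Finset.prod_union d2, e3]
    have pU : ∏ l ∈ (S ∪ T) \ (S ∩ T), x l = (∏ l ∈ S \ T, x l) * ∏ l ∈ T \ S, x l := by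
      rw [e4, Finset.prod_union d3]
    simp only [pS, pT, pU]
    ring

lemma key3 (m : ℕ) (x : Fin m → ℝ) (a b : ℕ) (hb : 2 ≤ b) :
    ∑ A ∈ powersetCard a (univ : Finset (Fin m)),
      ∑ B ∈ powersetCard b (univ \ A),
        ∑ l ∈ B, ∑ k ∈ B.erase l,
          (∏ i ∈ A, x i) ^ 2 * (x l ^ 2 * ∏ i ∈ (B.erase l).erase k, x i)
    = ∑ A ∈ powersetCard (a+1) (univ : Finset (Fin m)),
      ∑ C ∈ powersetCard (b-2) (univ \ A),
        ∑ l ∈ A, ∑ k ∈ univ \ (A ∪ C),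
          (∏ i ∈ A, x i) ^ 2 * ∏ i ∈ C, x i := by
  simp only [Finset.sum_sigma']
  refine Finset.sum_nbij'
    (fun p => ⟨insert p.2.2.1 p.1, ⟨(p.2.1.erase p.2.2.1).erase p.2.2.2, p.2.2.1, p.2.2.2⟩⟩)
    (fun q => ⟨q.1.erase q.2.2.1, ⟨insert q.2.2.1 (insert q.2.2.2 q.2.1), q.2.2.1, q.2.2.2⟩⟩)
    ?_ ?_ ?_ ?_ ?_
  · rintro ⟨A, B, l, k⟩ hp
    simp only [Finset.mem_sigma, Finset.mem_powersetCard, Finset.mem_erase] at hp ⊢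
    obtain ⟨⟨hAu, hAc⟩, ⟨hBu, hBc⟩, hl, hkl, hk⟩ := hp
    have hBA : ∀ z ∈ B, z ∉ A := fun z hz => (Finset.mem_sdiff.mp (hBu hz)).2
    have hlA : l ∉ A := hBA l hl
    refine ⟨⟨subset_univ _, by rw [Finset.card_insert_of_notMem hlA, hAc]⟩,
      ⟨?_, ?_⟩, ?_, ?_⟩
    · intro z hz
      simp only [Finset.mem_erase] at hz
      obtain ⟨hzk, hzl, hzB⟩ := hz
      simp only [Finset.mem_sdiff, Finset.mem_insert]
      exact ⟨Finset.mem_univ z, by push_neg; exact ⟨hzl, hBA z hzB⟩⟩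
    · rw [Finset.card_erase_of_mem (Finset.mem_erase.mpr ⟨hkl, hk⟩),
        Finset.card_erase_of_mem hl, hBc]
      omega
    · exact Finset.mem_insert_self l A
    · simp only [Finset.mem_sdiff, Finset.mem_union, Finset.mem_insert, Finset.mem_erase,
        Finset.mem_univ, true_and]
      tauto
  · rintro ⟨A, C, l, k⟩ hq
    simp only [Finset.mem_sigma, Finset.mem_powersetCard, Finset.mem_sdiff,
      Finset.mem_union] at hq ⊢
    obtain ⟨⟨hAu, hAc⟩, ⟨hCu, hCc⟩, hl, _, hk⟩ := hq
    push_neg at hk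
    obtain ⟨hkA, hkC⟩ := hk
    have hCA : ∀ z ∈ C, z ∉ A := fun z hz => (Finset.mem_sdiff.mp (hCu hz)).2
    have hlC : l ∉ C := fun h => hCA l h hl
    have hkl : k ≠ l := fun h => hkA (h ▸ hl)
    have hlkC : l ∉ insert k C := by
      simp only [Finset.mem_insert]; push_neg; exact ⟨fun h => hkl h.symm, hlC⟩
    refine ⟨⟨subset_univ _, by rw [Finset.card_erase_of_mem hl, hAc]; omega⟩, ⟨?_, ?_⟩, ?_, ?_⟩
    · intro z hz
      simp only [Finset.mem_insert] at hz
      simp only [Finset.mem_sdiff, Finset.mem_erase]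
      refine ⟨Finset.mem_univ z, ?_⟩
      push_neg
      rcases hz with rfl | rfl | hz
      · intro h; exact absurd rfl h
      · intro _; exact hkA
      · intro _; exact fun h => hCA z hz h
    · rw [Finset.card_insert_of_notMem hlkC, Finset.card_insert_of_notMem hkC, hCc]
      omega
    · exact Finset.mem_insert_self l _
    · exact Finset.mem_erase.mpr ⟨hkl, Finset.mem_insert_of_mem (Finset.mem_insert_self k C)⟩
  · rintro ⟨A, B, l, k⟩ hp
    simp only [Finset.mem_sigma, Finset.mem_powersetCard, Finset.mem_erase] at hp
    obtain ⟨⟨hAu, hAc⟩, ⟨hBu, hBc⟩, hl, hkl, hk⟩ := hp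
    have hBA : ∀ z ∈ B, z ∉ A := fun z hz => (Finset.mem_sdiff.mp (hBu hz)).2
    have hlA : l ∉ A := hBA l hl
    have e1 : (insert l A).erase l = A := Finset.erase_insert hlA
    have e2 : insert l (insert k ((B.erase l).erase k)) = B := by
      rw [Finset.insert_erase (Finset.mem_erase.mpr ⟨hkl, hk⟩), Finset.insert_erase hl]
    simp only [e1, e2]
  · rintro ⟨A, C, l, k⟩ hq
    simp only [Finset.mem_sigma, Finset.mem_powersetCard, Finset.mem_sdiff,
      Finset.mem_union] at hq
    obtain ⟨⟨hAu, hAc⟩, ⟨hCu, hCc⟩, hl, _, hk⟩ := hq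
    push_neg at hk
    obtain ⟨hkA, hkC⟩ := hk
    have hCA : ∀ z ∈ C, z ∉ A := fun z hz => (Finset.mem_sdiff.mp (hCu hz)).2
    have hlC : l ∉ C := fun h => hCA l h hl
    have hkl : k ≠ l := fun h => hkA (h ▸ hl)
    have hlkC : l ∉ insert k C := by
      simp only [Finset.mem_insert]; push_neg; exact ⟨fun h => hkl h.symm, hlC⟩
    have e1 : insert l (A.erase l) = A := Finset.insert_erase hl
    have e2 : ((insert l (insert k C)).erase l).erase k = C := by
      rw [Finset.erase_insert hlkC, Finset.erase_insert hkC]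
    simp only [e1, e2]
  · rintro ⟨A, B, l, k⟩ hp
    simp only [Finset.mem_sigma, Finset.mem_powersetCard, Finset.mem_erase] at hp
    obtain ⟨⟨hAu, hAc⟩, ⟨hBu, hBc⟩, hl, hkl, hk⟩ := hp
    have hlA : l ∉ A := fun h => (Finset.mem_sdiff.mp (hBu hl)).2 h
    simp only []
    rw [Finset.prod_insert hlA]
    ring

lemma key4 (m : ℕ) (x : Fin m → ℝ) (a b : ℕ) (hb : 2 ≤ b) (hab : a + b ≤ m) :
    ∑ A ∈ powersetCard (a+1) (univ : Finset (Fin m)),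
      ∑ C ∈ powersetCard (b-2) (univ \ A),
        ∑ l ∈ A, ∑ k ∈ univ \ (A ∪ C),
          (∏ i ∈ A, x i) ^ 2 * ∏ i ∈ C, x i
    = ((a : ℝ) + 1) * ((m : ℝ) - (a : ℝ) - (b : ℝ) + 1) * MM m x (a+1) (b-2) := by
  rw [MM, Finset.mul_sum]
  refine Finset.sum_congr rfl fun A hA => ?_
  rw [Finset.mul_sum]
  refine Finset.sum_congr rfl fun C hC => ?_
  obtain ⟨hAu, hAc⟩ := Finset.mem_powersetCard.mp hA
  obtain ⟨hCu, hCc⟩ := Finset.mem_powersetCard.mp hC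
  have hdisj : Disjoint A C :=
    Finset.disjoint_right.mpr fun z hz => (Finset.mem_sdiff.mp (hCu hz)).2
  have hcard : (univ \ (A ∪ C)).card = m - (a + b - 1) := by
    rw [Finset.card_sdiff_of_subset (subset_univ _), Finset.card_univ, Fintype.card_fin,
      Finset.card_union_of_disjoint hdisj, hAc, hCc]
    omega
  rw [Finset.sum_congr rfl (fun l (_ : l ∈ A) => Finset.sum_const _),
    Finset.sum_const, hcard, hAc]
  simp only [smul_smul, nsmul_eq_mul]
  rw [Nat.cast_sub (by omega : a + b - 1 ≤ m), Nat.cast_sub (by omega : 1 ≤ a + b)]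
  push_cast
  ring

lemma MM_eq_zero (m : ℕ) (x : Fin m → ℝ) (a b : ℕ) (h : m < a + b) :
    MM m x a b = 0 := by
  rw [MM]
  refine Finset.sum_eq_zero fun A hA => ?_
  obtain ⟨hAu, hAc⟩ := Finset.mem_powersetCard.mp hA
  have hc : (univ \ A).card < b := by
    rw [Finset.card_sdiff_of_subset (subset_univ A), Finset.card_univ, Fintype.card_fin, hAc]
    have : a ≤ m := by
      calc a = A.card := hAc.symm
      _ ≤ (univ : Finset (Fin m)).card := Finset.card_le_card (subset_univ A)
      _ = m := by rw [Finset.card_univ, Fintype.card_fin]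
    omega
  rw [Finset.powersetCard_eq_empty.mpr hc, Finset.sum_empty]

lemma MM_step (m : ℕ) (x : Fin m → ℝ) (hx : ∀ i, 0 ≤ x i) (a b : ℕ) (hb : 2 ≤ b) :
    (b : ℝ) * ((b : ℝ) - 1) * MM m x a b
      ≤ ((a : ℝ) + 1) * ((m : ℝ) - (a : ℝ) - (b : ℝ) + 1) * MM m x (a+1) (b-2) := by
  by_cases hab : a + b ≤ m
  case neg =>
    rw [MM_eq_zero m x a b (by omega), mul_zero]
    by_cases hab2 : a + b = m + 1
    · have : ((m : ℝ) - (a : ℝ) - (b : ℝ) + 1) = 0 := by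
        have : (m : ℝ) + 1 = (a : ℝ) + (b : ℝ) := by exact_mod_cast congrArg (Nat.cast : ℕ → ℝ) hab2.symm
        linarith
      rw [this]; ring_nf; rfl
    · rw [MM_eq_zero m x (a+1) (b-2) (by omega), mul_zero]
  case pos =>
  -- main case
  have key1 : ∀ A ∈ powersetCard a (univ : Finset (Fin m)),
      ∀ B ∈ powersetCard b (univ \ A),
      (b : ℝ) * ((b : ℝ) - 1) * ((∏ i ∈ A, x i) ^ 2 * ∏ i ∈ B, x i)
        = ∑ l ∈ B, ∑ k ∈ B.erase l,
            (∏ i ∈ A, x i) ^ 2 * (x l * x k * ∏ i ∈ (B.erase l).erase k, x i) := by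
    intro A _ B hB
    obtain ⟨hBu, hBc⟩ := Finset.mem_powersetCard.mp hB
    have inner : ∀ l ∈ B, ∑ k ∈ B.erase l,
        (∏ i ∈ A, x i) ^ 2 * (x l * x k * ∏ i ∈ (B.erase l).erase k, x i)
        = ((b : ℝ) - 1) * ((∏ i ∈ A, x i) ^ 2 * (x l * ∏ i ∈ B.erase l, x i)) := by
      intro l hl
      have : ∀ k ∈ B.erase l,
          (∏ i ∈ A, x i) ^ 2 * (x l * x k * ∏ i ∈ (B.erase l).erase k, x i)
          = (∏ i ∈ A, x i) ^ 2 * (x l * ∏ i ∈ B.erase l, x i) := by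
        intro k hk
        rw [mul_assoc (x l), Finset.mul_prod_erase (B.erase l) x hk]
      rw [Finset.sum_congr rfl this, Finset.sum_const, Finset.card_erase_of_mem hl, hBc,
        nsmul_eq_mul]
      push_cast [Nat.cast_sub (by omega : 1 ≤ b)]
      ring
    rw [Finset.sum_congr rfl inner, ← Finset.mul_sum]
    have : ∀ l ∈ B, (∏ i ∈ A, x i) ^ 2 * (x l * ∏ i ∈ B.erase l, x i)
        = (∏ i ∈ A, x i) ^ 2 * ∏ i ∈ B, x i := by
      intro l hl
      rw [Finset.mul_prod_erase B x hl]
    rw [Finset.sum_congr rfl this, Finset.sum_const, hBc, nsmul_eq_mul]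
    ring
  have key2 : ∀ A ∈ powersetCard a (univ : Finset (Fin m)),
      ∀ B ∈ powersetCard b (univ \ A),
      ∑ l ∈ B, ∑ k ∈ B.erase l,
          (∏ i ∈ A, x i) ^ 2 * (x l * x k * ∏ i ∈ (B.erase l).erase k, x i)
      ≤ ∑ l ∈ B, ∑ k ∈ B.erase l,
          (∏ i ∈ A, x i) ^ 2 * (x l ^ 2 * ∏ i ∈ (B.erase l).erase k, x i) := by
    intro A _ B _
    have swap : ∑ l ∈ B, ∑ k ∈ B.erase l,
        (∏ i ∈ A, x i) ^ 2 * (x k ^ 2 * ∏ i ∈ (B.erase l).erase k, x i)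
        = ∑ l ∈ B, ∑ k ∈ B.erase l,
        (∏ i ∈ A, x i) ^ 2 * (x l ^ 2 * ∏ i ∈ (B.erase l).erase k, x i) := by
      rw [Finset.sum_comm' (t' := B) (s' := fun k => B.erase k)
        (by intro l k; simp only [Finset.mem_erase]; constructor
            · rintro ⟨h1, h2, h3⟩; exact ⟨⟨fun h => h2 (h ▸ rfl), h1⟩, h3⟩
            · rintro ⟨⟨h1, h2⟩, h3⟩; exact ⟨h2, fun h => h1 (h ▸ rfl), h3⟩)]
      refine Finset.sum_congr rfl fun k hk => Finset.sum_congr rfl fun l hl => ?_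
      have ec : (B.erase l).erase k = (B.erase k).erase l := by
        ext z; simp only [Finset.mem_erase]; tauto
      rw [ec]
    have half : ∑ l ∈ B, ∑ k ∈ B.erase l,
        (∏ i ∈ A, x i) ^ 2 * (x l * x k * ∏ i ∈ (B.erase l).erase k, x i)
        ≤ ∑ l ∈ B, ∑ k ∈ B.erase l,
        (∏ i ∈ A, x i) ^ 2 * ((x l ^ 2 + x k ^ 2) / 2 * ∏ i ∈ (B.erase l).erase k, x i) := by
      refine Finset.sum_le_sum fun l _ => Finset.sum_le_sum fun k _ => ?_
      have hP : (0 : ℝ) ≤ ∏ i ∈ (B.erase l).erase k, x i :=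
        Finset.prod_nonneg fun i _ => hx i
      have hAM : x l * x k ≤ (x l ^ 2 + x k ^ 2) / 2 := by nlinarith [sq_nonneg (x l - x k)]
      have := mul_le_mul_of_nonneg_right hAM hP
      nlinarith [sq_nonneg (∏ i ∈ A, x i), mul_le_mul_of_nonneg_left this (sq_nonneg (∏ i ∈ A, x i))]
    calc ∑ l ∈ B, ∑ k ∈ B.erase l,
          (∏ i ∈ A, x i) ^ 2 * (x l * x k * ∏ i ∈ (B.erase l).erase k, x i)
        ≤ ∑ l ∈ B, ∑ k ∈ B.erase l,
          (∏ i ∈ A, x i) ^ 2 * ((x l ^ 2 + x k ^ 2) / 2 * ∏ i ∈ (B.erase l).erase k, x i) := half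
      _ = ∑ l ∈ B, ∑ k ∈ B.erase l,
          (∏ i ∈ A, x i) ^ 2 * (x l ^ 2 * ∏ i ∈ (B.erase l).erase k, x i) := by
          have expand : ∀ l ∈ B, ∀ k ∈ B.erase l,
              (∏ i ∈ A, x i) ^ 2 * ((x l ^ 2 + x k ^ 2) / 2 * ∏ i ∈ (B.erase l).erase k, x i)
              = ((∏ i ∈ A, x i) ^ 2 * (x l ^ 2 * ∏ i ∈ (B.erase l).erase k, x i)) / 2
                + ((∏ i ∈ A, x i) ^ 2 * (x k ^ 2 * ∏ i ∈ (B.erase l).erase k, x i)) / 2 := by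
            intro l _ k _; ring
          rw [Finset.sum_congr rfl fun l hl => Finset.sum_congr rfl (expand l hl)]
          simp only [Finset.sum_add_distrib, ← Finset.sum_div]
          rw [swap]; ring
  calc (b : ℝ) * ((b : ℝ) - 1) * MM m x a b
      = ∑ A ∈ powersetCard a (univ : Finset (Fin m)),
          ∑ B ∈ powersetCard b (univ \ A),
            (b : ℝ) * ((b : ℝ) - 1) * ((∏ i ∈ A, x i) ^ 2 * ∏ i ∈ B, x i) := by
        rw [MM, Finset.mul_sum]
        exact Finset.sum_congr rfl fun A _ => Finset.mul_sum _ _ _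
    _ = ∑ A ∈ powersetCard a (univ : Finset (Fin m)),
          ∑ B ∈ powersetCard b (univ \ A),
            ∑ l ∈ B, ∑ k ∈ B.erase l,
              (∏ i ∈ A, x i) ^ 2 * (x l * x k * ∏ i ∈ (B.erase l).erase k, x i) :=
        Finset.sum_congr rfl fun A hA => Finset.sum_congr rfl fun B hB => key1 A hA B hB
    _ ≤ ∑ A ∈ powersetCard a (univ : Finset (Fin m)),
          ∑ B ∈ powersetCard b (univ \ A),
            ∑ l ∈ B, ∑ k ∈ B.erase l,
              (∏ i ∈ A, x i) ^ 2 * (x l ^ 2 * ∏ i ∈ (B.erase l).erase k, x i) :=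
        Finset.sum_le_sum fun A hA => Finset.sum_le_sum fun B hB => key2 A hA B hB
    _ = ∑ A ∈ powersetCard (a+1) (univ : Finset (Fin m)),
          ∑ C ∈ powersetCard (b-2) (univ \ A),
            ∑ l ∈ A, ∑ k ∈ univ \ (A ∪ C),
              (∏ i ∈ A, x i) ^ 2 * ∏ i ∈ C, x i := key3 m x a b hb
    _ = ((a : ℝ) + 1) * ((m : ℝ) - (a : ℝ) - (b : ℝ) + 1) * MM m x (a+1) (b-2) :=
        key4 m x a b hb hab

lemma cast_choose_two (r : ℕ) : (r.choose 2 : ℝ) = r * (r - 1) / 2 := by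
  induction r with
  | zero => norm_num
  | succ k ih =>
    rw [Nat.choose_succ_succ]
    push_cast [ih, Nat.choose_one_right]
    ring
lemma cast_choose_three (r : ℕ) : (r.choose 3 : ℝ) = r * (r - 1) * (r - 2) / 6 := by
  induction r with
  | zero => norm_num
  | succ k ih =>
    rw [Nat.choose_succ_succ]
    push_cast [ih, cast_choose_two]
    ring
lemma cast_choose_four (r : ℕ) : (r.choose 4 : ℝ) = r * (r - 1) * (r - 2) * (r - 3) / 24 := by
  induction r with
  | zero => norm_num
  | succ k ih =>
    rw [Nat.choose_succ_succ]
    push_cast [ih, cast_choose_three]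
    ring
lemma cast_choose_five (r : ℕ) : (r.choose 5 : ℝ) = r * (r - 1) * (r - 2) * (r - 3) * (r - 4) / 120 := by
  induction r with
  | zero => norm_num
  | succ k ih =>
    rw [Nat.choose_succ_succ]
    push_cast [ih, cast_choose_four]
    ring
set_option maxHeartbeats 2000000 in
theorem stmt11 (n : ℕ) (hn : 6 ≤ n) (κ : Fin (n - 1) → ℝ) (hκ : ∀ i, 1 ≤ κ i) :
    (5 * esymm (n - 1) 5 κ * esymm (n - 1) 3 κ / esymm (n - 1) 4 κ
        - 4 * ((n : ℝ) - 5) / ((n : ℝ) - 4) * esymm (n - 1) 4 κ)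
      + ((n : ℝ) - 4) * ((n : ℝ) - 5) / 6 *
        (4 * ((n : ℝ) - 3) / ((n : ℝ) - 4) * esymm (n - 1) 2 κ
          - 3 * (esymm (n - 1) 3 κ)^2 / esymm (n - 1) 4 κ)
      + ((n : ℝ) - 2) * ((n : ℝ) - 3) * ((n : ℝ) - 4) * ((n : ℝ) - 5) / 24 *
        (esymm (n - 1) 1 κ * esymm (n - 1) 3 κ / esymm (n - 1) 4 κ
          - 4 * ((n : ℝ) - 1) / ((n : ℝ) - 4)) ≤ 0 := by
  set x : Fin (n - 1) → ℝ := fun i => κ i - 1 with hxdef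
  have hx : ∀ i, 0 ≤ x i := fun i => by simp [hxdef]; linarith [hκ i]
  have hκx : κ = fun i => x i + 1 := by funext i; simp [hxdef]
  have hn6 : (6:ℝ) ≤ (n:ℝ) := by exact_mod_cast hn
  have hm : ((n - 1 : ℕ) : ℝ) = (n:ℝ) - 1 := by
    rw [Nat.cast_sub (by omega)]; norm_num
  have hd : ∀ j : ℕ, j ≤ n → ((n - j : ℕ) : ℝ) = (n:ℝ) - j := by
    intro j hj; rw [Nat.cast_sub hj]
  have hd1 := hd 1 (by omega); have hd2 := hd 2 (by omega); have hd3 := hd 3 (by omega)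
  have hd4 := hd 4 (by omega); have hd5 := hd 5 (by omega); have hd6 := hd 6 (by omega)
  have hS1 : esymm (n - 1) 1 κ = (((n:ℝ)-1) + esymm (n - 1) 1 x) := by
    rw [hκx, esymm_shift]
    norm_num [Finset.sum_range_succ, esymm_zero, Nat.sub_sub,
      cast_choose_two, cast_choose_three, cast_choose_four, cast_choose_five,
      Nat.choose_one_right, hd1, hd2, hd3, hd4, hd5, hd6]
    try push_cast
    try ring
  have hS2 : esymm (n - 1) 2 κ = (((n:ℝ)-1)*((n:ℝ)-2)/2 + ((n:ℝ)-2) * esymm (n - 1) 1 x + esymm (n - 1) 2 x) := by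
    rw [hκx, esymm_shift]
    norm_num [Finset.sum_range_succ, esymm_zero, Nat.sub_sub,
      cast_choose_two, cast_choose_three, cast_choose_four, cast_choose_five,
      Nat.choose_one_right, hd1, hd2, hd3, hd4, hd5, hd6]
    try push_cast
    try ring
    exact Or.inl trivial
  have hS3 : esymm (n - 1) 3 κ = (((n:ℝ)-1)*((n:ℝ)-2)*((n:ℝ)-3)/6 + ((n:ℝ)-2)*((n:ℝ)-3)/2 * esymm (n - 1) 1 x + ((n:ℝ)-3) * esymm (n - 1) 2 x + esymm (n - 1) 3 x) := by
    rw [hκx, esymm_shift]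
    norm_num [Finset.sum_range_succ, esymm_zero, Nat.sub_sub,
      cast_choose_two, cast_choose_three, cast_choose_four, cast_choose_five,
      Nat.choose_one_right, hd1, hd2, hd3, hd4, hd5, hd6]
    try push_cast
    try ring
  have hS4 : esymm (n - 1) 4 κ = (((n:ℝ)-1)*((n:ℝ)-2)*((n:ℝ)-3)*((n:ℝ)-4)/24 + ((n:ℝ)-2)*((n:ℝ)-3)*((n:ℝ)-4)/6 * esymm (n - 1) 1 x + ((n:ℝ)-3)*((n:ℝ)-4)/2 * esymm (n - 1) 2 x + ((n:ℝ)-4) * esymm (n - 1) 3 x + esymm (n - 1) 4 x) := by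
    rw [hκx, esymm_shift]
    norm_num [Finset.sum_range_succ, esymm_zero, Nat.sub_sub,
      cast_choose_two, cast_choose_three, cast_choose_four, cast_choose_five,
      Nat.choose_one_right, hd1, hd2, hd3, hd4, hd5, hd6]
    try push_cast
    try ring
  have hS5 : esymm (n - 1) 5 κ = (((n:ℝ)-1)*((n:ℝ)-2)*((n:ℝ)-3)*((n:ℝ)-4)*((n:ℝ)-5)/120 + ((n:ℝ)-2)*((n:ℝ)-3)*((n:ℝ)-4)*((n:ℝ)-5)/24 * esymm (n - 1) 1 x + ((n:ℝ)-3)*((n:ℝ)-4)*((n:ℝ)-5)/6 * esymm (n - 1) 2 x + ((n:ℝ)-4)*((n:ℝ)-5)/2 * esymm (n - 1) 3 x + ((n:ℝ)-5) * esymm (n - 1) 4 x + esymm (n - 1) 5 x) := by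
    rw [hκx, esymm_shift]
    norm_num [Finset.sum_range_succ, esymm_zero, Nat.sub_sub,
      cast_choose_two, cast_choose_three, cast_choose_four, cast_choose_five,
      Nat.choose_one_right, hd1, hd2, hd3, hd4, hd5, hd6]
    try push_cast
    try ring
  have hP12 : esymm (n - 1) 1 x * esymm (n - 1) 2 x = 3 * MM (n - 1) x 0 3 + 1 * MM (n - 1) x 1 1 := by
    rw [esymm_mul (n - 1) x 1 2 (by norm_num)]
    norm_num [Finset.sum_range_succ, Nat.choose]
  have hP13 : esymm (n - 1) 1 x * esymm (n - 1) 3 x = 4 * MM (n - 1) x 0 4 + 1 * MM (n - 1) x 1 2 := by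
    rw [esymm_mul (n - 1) x 1 3 (by norm_num)]
    norm_num [Finset.sum_range_succ, Nat.choose]
  have hP14 : esymm (n - 1) 1 x * esymm (n - 1) 4 x = 5 * MM (n - 1) x 0 5 + 1 * MM (n - 1) x 1 3 := by
    rw [esymm_mul (n - 1) x 1 4 (by norm_num)]
    norm_num [Finset.sum_range_succ, Nat.choose]
  have hP15 : esymm (n - 1) 1 x * esymm (n - 1) 5 x = 6 * MM (n - 1) x 0 6 + 1 * MM (n - 1) x 1 4 := by
    rw [esymm_mul (n - 1) x 1 5 (by norm_num)]
    norm_num [Finset.sum_range_succ, Nat.choose]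
  have hP22 : esymm (n - 1) 2 x * esymm (n - 1) 2 x = 6 * MM (n - 1) x 0 4 + 2 * MM (n - 1) x 1 2 + 1 * MM (n - 1) x 2 0 := by
    rw [esymm_mul (n - 1) x 2 2 (by norm_num)]
    norm_num [Finset.sum_range_succ, Nat.choose]
  have hP23 : esymm (n - 1) 2 x * esymm (n - 1) 3 x = 10 * MM (n - 1) x 0 5 + 3 * MM (n - 1) x 1 3 + 1 * MM (n - 1) x 2 1 := by
    rw [esymm_mul (n - 1) x 2 3 (by norm_num)]
    norm_num [Finset.sum_range_succ, Nat.choose]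
  have hP24 : esymm (n - 1) 2 x * esymm (n - 1) 4 x = 15 * MM (n - 1) x 0 6 + 4 * MM (n - 1) x 1 4 + 1 * MM (n - 1) x 2 2 := by
    rw [esymm_mul (n - 1) x 2 4 (by norm_num)]
    norm_num [Finset.sum_range_succ, Nat.choose]
  have hP25 : esymm (n - 1) 2 x * esymm (n - 1) 5 x = 21 * MM (n - 1) x 0 7 + 5 * MM (n - 1) x 1 5 + 1 * MM (n - 1) x 2 3 := by
    rw [esymm_mul (n - 1) x 2 5 (by norm_num)]
    norm_num [Finset.sum_range_succ, Nat.choose]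
  have hP33 : esymm (n - 1) 3 x * esymm (n - 1) 3 x = 20 * MM (n - 1) x 0 6 + 6 * MM (n - 1) x 1 4 + 2 * MM (n - 1) x 2 2 + 1 * MM (n - 1) x 3 0 := by
    rw [esymm_mul (n - 1) x 3 3 (by norm_num)]
    norm_num [Finset.sum_range_succ, Nat.choose]
  have hP34 : esymm (n - 1) 3 x * esymm (n - 1) 4 x = 35 * MM (n - 1) x 0 7 + 10 * MM (n - 1) x 1 5 + 3 * MM (n - 1) x 2 3 + 1 * MM (n - 1) x 3 1 := by
    rw [esymm_mul (n - 1) x 3 4 (by norm_num)]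
    norm_num [Finset.sum_range_succ, Nat.choose]
  have hP35 : esymm (n - 1) 3 x * esymm (n - 1) 5 x = 56 * MM (n - 1) x 0 8 + 15 * MM (n - 1) x 1 6 + 4 * MM (n - 1) x 2 4 + 1 * MM (n - 1) x 3 2 := by
    rw [esymm_mul (n - 1) x 3 5 (by norm_num)]
    norm_num [Finset.sum_range_succ, Nat.choose]
  have hP44 : esymm (n - 1) 4 x * esymm (n - 1) 4 x = 70 * MM (n - 1) x 0 8 + 20 * MM (n - 1) x 1 6 + 6 * MM (n - 1) x 2 4 + 2 * MM (n - 1) x 3 2 + 1 * MM (n - 1) x 4 0 := by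
    rw [esymm_mul (n - 1) x 4 4 (by norm_num)]
    norm_num [Finset.sum_range_succ, Nat.choose]
  have hM03 : esymm (n - 1) 3 x = MM (n - 1) x 0 3 := esymm_eq_MM_zero (n - 1) x 3
  have hM04 : esymm (n - 1) 4 x = MM (n - 1) x 0 4 := esymm_eq_MM_zero (n - 1) x 4
  have hM05 : esymm (n - 1) 5 x = MM (n - 1) x 0 5 := esymm_eq_MM_zero (n - 1) x 5
  have g03 : (6 * MM (n - 1) x 0 3 - 1 * ((n:ℝ) - 3) * MM (n - 1) x 1 1) ≤ 0 := by
    have h := MM_step (n - 1) x hx 0 3 (by norm_num)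
    rw [hm] at h
    push_cast at h
    linarith [h]
  have ht03 : (0:ℝ) ≤ (4/3) * ((n:ℝ)-2) * ((n:ℝ)-3) * ((n:ℝ)-4)^2 * ((n:ℝ)-5) := (mul_nonneg (mul_nonneg (mul_nonneg (mul_nonneg (by norm_num) (by linarith)) (by linarith)) (sq_nonneg ((n:ℝ)-4))) (by linarith))
  have hterm03 : (4/3) * ((n:ℝ)-2) * ((n:ℝ)-3) * ((n:ℝ)-4)^2 * ((n:ℝ)-5) * (6 * MM (n - 1) x 0 3 - 1 * ((n:ℝ) - 3) * MM (n - 1) x 1 1) ≤ 0 := by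
    have := mul_le_mul_of_nonneg_left g03 ht03
    simpa using this
  have g04 : (12 * MM (n - 1) x 0 4 - 1 * ((n:ℝ) - 4) * MM (n - 1) x 1 2) ≤ 0 := by
    have h := MM_step (n - 1) x hx 0 4 (by norm_num)
    rw [hm] at h
    push_cast at h
    linarith [h]
  have ht04 : (0:ℝ) ≤ 8 * ((n:ℝ)-3)^2 * ((n:ℝ)-4) * ((n:ℝ)-5) := (mul_nonneg (mul_nonneg (mul_nonneg (by norm_num) (sq_nonneg ((n:ℝ)-3))) (by linarith)) (by linarith))
  have hterm04 : 8 * ((n:ℝ)-3)^2 * ((n:ℝ)-4) * ((n:ℝ)-5) * (12 * MM (n - 1) x 0 4 - 1 * ((n:ℝ) - 4) * MM (n - 1) x 1 2) ≤ 0 := by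
    have := mul_le_mul_of_nonneg_left g04 ht04
    simpa using this
  have g12 : (2 * MM (n - 1) x 1 2 - 2 * ((n:ℝ) - 3) * MM (n - 1) x 2 0) ≤ 0 := by
    have h := MM_step (n - 1) x hx 1 2 (by norm_num)
    rw [hm] at h
    push_cast at h
    linarith [h]
  have ht12 : (0:ℝ) ≤ 4 * ((n:ℝ)-3) * ((n:ℝ)-4)^2 * ((n:ℝ)-5) := (mul_nonneg (mul_nonneg (mul_nonneg (by norm_num) (by linarith)) (sq_nonneg ((n:ℝ)-4))) (by linarith))
  have hterm12 : 4 * ((n:ℝ)-3) * ((n:ℝ)-4)^2 * ((n:ℝ)-5) * (2 * MM (n - 1) x 1 2 - 2 * ((n:ℝ) - 3) * MM (n - 1) x 2 0) ≤ 0 := by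
    have := mul_le_mul_of_nonneg_left g12 ht12
    simpa using this
  have g05 : (20 * MM (n - 1) x 0 5 - 1 * ((n:ℝ) - 5) * MM (n - 1) x 1 3) ≤ 0 := by
    have h := MM_step (n - 1) x hx 0 5 (by norm_num)
    rw [hm] at h
    push_cast at h
    linarith [h]
  have ht05 : (0:ℝ) ≤ 4 * ((n:ℝ)-3) * ((n:ℝ)-4) * (7*(n:ℝ)-32) := (mul_nonneg (mul_nonneg (mul_nonneg (by norm_num) (by linarith)) (by linarith)) (by linarith))
  have hterm05 : 4 * ((n:ℝ)-3) * ((n:ℝ)-4) * (7*(n:ℝ)-32) * (20 * MM (n - 1) x 0 5 - 1 * ((n:ℝ) - 5) * MM (n - 1) x 1 3) ≤ 0 := by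
    have := mul_le_mul_of_nonneg_left g05 ht05
    simpa using this
  have g13 : (6 * MM (n - 1) x 1 3 - 2 * ((n:ℝ) - 4) * MM (n - 1) x 2 1) ≤ 0 := by
    have h := MM_step (n - 1) x hx 1 3 (by norm_num)
    rw [hm] at h
    push_cast at h
    linarith [h]
  have ht13 : (0:ℝ) ≤ 12 * ((n:ℝ)-3) * ((n:ℝ)-4) * ((n:ℝ)-5) := (mul_nonneg (mul_nonneg (mul_nonneg (by norm_num) (by linarith)) (by linarith)) (by linarith))
  have hterm13 : 12 * ((n:ℝ)-3) * ((n:ℝ)-4) * ((n:ℝ)-5) * (6 * MM (n - 1) x 1 3 - 2 * ((n:ℝ) - 4) * MM (n - 1) x 2 1) ≤ 0 := by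
    have := mul_le_mul_of_nonneg_left g13 ht13
    simpa using this
  have g06 : (30 * MM (n - 1) x 0 6 - 1 * ((n:ℝ) - 6) * MM (n - 1) x 1 4) ≤ 0 := by
    have h := MM_step (n - 1) x hx 0 6 (by norm_num)
    rw [hm] at h
    push_cast at h
    linarith [h]
  have ht06 : (0:ℝ) ≤ 4 * ((n:ℝ)-4) * (17*(n:ℝ)-67) := (mul_nonneg (mul_nonneg (by norm_num) (by linarith)) (by linarith))
  have hterm06 : 4 * ((n:ℝ)-4) * (17*(n:ℝ)-67) * (30 * MM (n - 1) x 0 6 - 1 * ((n:ℝ) - 6) * MM (n - 1) x 1 4) ≤ 0 := by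
    have := mul_le_mul_of_nonneg_left g06 ht06
    simpa using this
  have g14 : (12 * MM (n - 1) x 1 4 - 2 * ((n:ℝ) - 5) * MM (n - 1) x 2 2) ≤ 0 := by
    have h := MM_step (n - 1) x hx 1 4 (by norm_num)
    rw [hm] at h
    push_cast at h
    linarith [h]
  have ht14 : (0:ℝ) ≤ 4 * ((n:ℝ)-4) * (7*(n:ℝ)-29) := (mul_nonneg (mul_nonneg (by norm_num) (by linarith)) (by linarith))
  have hterm14 : 4 * ((n:ℝ)-4) * (7*(n:ℝ)-29) * (12 * MM (n - 1) x 1 4 - 2 * ((n:ℝ) - 5) * MM (n - 1) x 2 2) ≤ 0 := by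
    have := mul_le_mul_of_nonneg_left g14 ht14
    simpa using this
  have g22 : (2 * MM (n - 1) x 2 2 - 3 * ((n:ℝ) - 4) * MM (n - 1) x 3 0) ≤ 0 := by
    have h := MM_step (n - 1) x hx 2 2 (by norm_num)
    rw [hm] at h
    push_cast at h
    linarith [h]
  have ht22 : (0:ℝ) ≤ 16 * ((n:ℝ)-4) * ((n:ℝ)-5) := (mul_nonneg (mul_nonneg (by norm_num) (by linarith)) (by linarith))
  have hterm22 : 16 * ((n:ℝ)-4) * ((n:ℝ)-5) * (2 * MM (n - 1) x 2 2 - 3 * ((n:ℝ) - 4) * MM (n - 1) x 3 0) ≤ 0 := by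
    have := mul_le_mul_of_nonneg_left g22 ht22
    simpa using this
  have g07 : (42 * MM (n - 1) x 0 7 - 1 * ((n:ℝ) - 7) * MM (n - 1) x 1 5) ≤ 0 := by
    have h := MM_step (n - 1) x hx 0 7 (by norm_num)
    rw [hm] at h
    push_cast at h
    linarith [h]
  have ht07 : (0:ℝ) ≤ 120 * ((n:ℝ)-4) := (mul_nonneg (by norm_num) (by linarith))
  have hterm07 : 120 * ((n:ℝ)-4) * (42 * MM (n - 1) x 0 7 - 1 * ((n:ℝ) - 7) * MM (n - 1) x 1 5) ≤ 0 := by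
    have := mul_le_mul_of_nonneg_left g07 ht07
    simpa using this
  have g15 : (20 * MM (n - 1) x 1 5 - 2 * ((n:ℝ) - 6) * MM (n - 1) x 2 3) ≤ 0 := by
    have h := MM_step (n - 1) x hx 1 5 (by norm_num)
    rw [hm] at h
    push_cast at h
    linarith [h]
  have ht15 : (0:ℝ) ≤ 48 * ((n:ℝ)-4) := (mul_nonneg (by norm_num) (by linarith))
  have hterm15 : 48 * ((n:ℝ)-4) * (20 * MM (n - 1) x 1 5 - 2 * ((n:ℝ) - 6) * MM (n - 1) x 2 3) ≤ 0 := by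
    have := mul_le_mul_of_nonneg_left g15 ht15
    simpa using this
  have g23 : (6 * MM (n - 1) x 2 3 - 3 * ((n:ℝ) - 5) * MM (n - 1) x 3 1) ≤ 0 := by
    have h := MM_step (n - 1) x hx 2 3 (by norm_num)
    rw [hm] at h
    push_cast at h
    linarith [h]
  have ht23 : (0:ℝ) ≤ 24 * ((n:ℝ)-4) := (mul_nonneg (by norm_num) (by linarith))
  have hterm23 : 24 * ((n:ℝ)-4) * (6 * MM (n - 1) x 2 3 - 3 * ((n:ℝ) - 5) * MM (n - 1) x 3 1) ≤ 0 := by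
    have := mul_le_mul_of_nonneg_left g23 ht23
    simpa using this
  have g08 : (56 * MM (n - 1) x 0 8 - 1 * ((n:ℝ) - 8) * MM (n - 1) x 1 6) ≤ 0 := by
    have h := MM_step (n - 1) x hx 0 8 (by norm_num)
    rw [hm] at h
    push_cast at h
    linarith [h]
  have ht08 : (0:ℝ) ≤ (120:ℝ) := (by norm_num)
  have hterm08 : (120:ℝ) * (56 * MM (n - 1) x 0 8 - 1 * ((n:ℝ) - 8) * MM (n - 1) x 1 6) ≤ 0 := by
    have := mul_le_mul_of_nonneg_left g08 ht08
    simpa using this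
  have g16 : (30 * MM (n - 1) x 1 6 - 2 * ((n:ℝ) - 7) * MM (n - 1) x 2 4) ≤ 0 := by
    have h := MM_step (n - 1) x hx 1 6 (by norm_num)
    rw [hm] at h
    push_cast at h
    linarith [h]
  have ht16 : (0:ℝ) ≤ (48:ℝ) := (by norm_num)
  have hterm16 : (48:ℝ) * (30 * MM (n - 1) x 1 6 - 2 * ((n:ℝ) - 7) * MM (n - 1) x 2 4) ≤ 0 := by
    have := mul_le_mul_of_nonneg_left g16 ht16
    simpa using this
  have g24 : (12 * MM (n - 1) x 2 4 - 3 * ((n:ℝ) - 6) * MM (n - 1) x 3 2) ≤ 0 := by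
    have h := MM_step (n - 1) x hx 2 4 (by norm_num)
    rw [hm] at h
    push_cast at h
    linarith [h]
  have ht24 : (0:ℝ) ≤ (24:ℝ) := (by norm_num)
  have hterm24 : (24:ℝ) * (12 * MM (n - 1) x 2 4 - 3 * ((n:ℝ) - 6) * MM (n - 1) x 3 2) ≤ 0 := by
    have := mul_le_mul_of_nonneg_left g24 ht24
    simpa using this
  have g32 : (2 * MM (n - 1) x 3 2 - 4 * ((n:ℝ) - 5) * MM (n - 1) x 4 0) ≤ 0 := by
    have h := MM_step (n - 1) x hx 3 2 (by norm_num)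
    rw [hm] at h
    push_cast at h
    linarith [h]
  have ht32 : (0:ℝ) ≤ (24:ℝ) := (by norm_num)
  have hterm32 : (24:ℝ) * (2 * MM (n - 1) x 3 2 - 4 * ((n:ℝ) - 5) * MM (n - 1) x 4 0) ≤ 0 := by
    have := mul_le_mul_of_nonneg_left g32 ht32
    simpa using this
  have hQE : 120*((n:ℝ)-4) * esymm (n - 1) 3 κ * esymm (n - 1) 5 κ - 96*((n:ℝ)-5) * esymm (n - 1) 4 κ^2 + 16*((n:ℝ)-4)*((n:ℝ)-5)*((n:ℝ)-3) * esymm (n - 1) 2 κ * esymm (n - 1) 4 κ - 12*((n:ℝ)-4)^2*((n:ℝ)-5) * esymm (n - 1) 3 κ^2 + ((n:ℝ)-2)*((n:ℝ)-3)*((n:ℝ)-4)^2*((n:ℝ)-5) * esymm (n - 1) 1 κ * esymm (n - 1) 3 κ - 4*((n:ℝ)-1)*((n:ℝ)-2)*((n:ℝ)-3)*((n:ℝ)-4)*((n:ℝ)-5) * esymm (n - 1) 4 κ = (4 * (n:ℝ)^6 + (-76) * (n:ℝ)^5 + 580 * (n:ℝ)^4 + (-2260) * (n:ℝ)^3 +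 4696 * (n:ℝ)^2 + (-4864) * (n:ℝ) + 1920) * esymm (n - 1) 3 x + (16 * (n:ℝ)^5 + (-240) * (n:ℝ)^4 + 1360 * (n:ℝ)^3 + (-3600) * (n:ℝ)^2 + 4384 * (n:ℝ) + (-1920)) * esymm (n - 1) 4 x + (20 * (n:ℝ)^4 + (-200) * (n:ℝ)^3 + 700 * (n:ℝ)^2 + (-1000) * (n:ℝ) + 480) * esymm (n - 1) 5 x + ((-4/3) * (n:ℝ)^6 + 28 * (n:ℝ)^5 + (-724/3) * (n:ℝ)^4 + 1092 * (n:ℝ)^3 + (-8200/3) * (n:ℝ)^2 + 3584 * (n:ℝ) + (-1920)) * esymm (n - 1) 1 x * esymm (n - 1) 2 x + (8 * (n:ℝ)^5 + (-144) * (n:ℝ)^4 + 1016 * (n:ℝ)^3 + (-3504) * (n:ℝ)^2 + 5888 * (n:ℝ) + (-3840)) * esymm (n - 1) 1 x * esymm (n - 1) 3 x + (44 * (n:ℝ)^4 + (-616) * (n:ℝ)^3 + 3124 * (n:ℝ)^2 + (-6776) * (n:ℝ) + 5280) * esymm (n - 1) 1 x * esymm (n - 1) 4 x + (60 * (n:ℝ)^3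 + (-540) * (n:ℝ)^2 + 1560 * (n:ℝ) + (-1440)) * esymm (n - 1) 1 x * esymm (n - 1) 5 x + ((-8) * (n:ℝ)^5 + 152 * (n:ℝ)^4 + (-1144) * (n:ℝ)^3 + 4264 * (n:ℝ)^2 + (-7872) * (n:ℝ) + 5760) * esymm (n - 1) 2 x * esymm (n - 1) 2 x + ((-24) * (n:ℝ)^4 + 384 * (n:ℝ)^3 + (-2280) * (n:ℝ)^2 + 5952 * (n:ℝ) + (-5760)) * esymm (n - 1) 2 x * esymm (n - 1) 3 x + (40 * (n:ℝ)^3 + (-480) * (n:ℝ)^2 + 1880 * (n:ℝ) + (-2400)) * esymm (n - 1) 2 x * esymm (n - 1) 4 x + (120 * (n:ℝ)^2 + (-840) * (n:ℝ) + 1440) * esymm (n - 1) 2 x * esymm (n - 1) 5 x + ((-48) * (n:ℝ)^3 + 624 * (n:ℝ)^2 + (-2688) * (n:ℝ) + 3840) * esymm (n - 1) 3 x * esymm (n - 1) 3 x + ((-72) * (n:ℝ)^2 + 648 * (n:ℝ) + (-1440)) * esymm (n - 1) 3 x * esymm (n - 1) 4 x + (120 * (n:ℝ) + (-480)) * esymm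 (n - 1) 3 x * esymm (n - 1) 5 x + ((-96) * (n:ℝ) + 480) * esymm (n - 1) 4 x * esymm (n - 1) 4 x := by
    linear_combination ((120*((n:ℝ)-4)) * esymm (n - 1) 3 κ) * hS5 + ((120*((n:ℝ)-4)) * (((n:ℝ)-1)*((n:ℝ)-2)*((n:ℝ)-3)*((n:ℝ)-4)*((n:ℝ)-5)/120 + ((n:ℝ)-2)*((n:ℝ)-3)*((n:ℝ)-4)*((n:ℝ)-5)/24 * esymm (n - 1) 1 x + ((n:ℝ)-3)*((n:ℝ)-4)*((n:ℝ)-5)/6 * esymm (n - 1) 2 x + ((n:ℝ)-4)*((n:ℝ)-5)/2 * esymm (n - 1) 3 x + ((n:ℝ)-5) * esymm (n - 1) 4 x + esymm (n - 1) 5 x) + (-12*((n:ℝ)-4)^2*((n:ℝ)-5)) * (esymm (n - 1) 3 κ + (((n:ℝ)-1)*((n:ℝ)-2)*((n:ℝ)-3)/6 + ((n:ℝ)-2)*((n:ℝ)-3)/2 * esymm (n - 1) 1 x + ((n:ℝ)-3) * esymm (n - 1) 2 x + esymm (n - 1) 3 x)) + (((n:ℝ)-2)*((n:ℝ)-3)*((n:ℝ)-4)^2*((n:ℝ)-5))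 * esymm (n - 1) 1 κ) * hS3 + ((-96*((n:ℝ)-5)) * (esymm (n - 1) 4 κ + (((n:ℝ)-1)*((n:ℝ)-2)*((n:ℝ)-3)*((n:ℝ)-4)/24 + ((n:ℝ)-2)*((n:ℝ)-3)*((n:ℝ)-4)/6 * esymm (n - 1) 1 x + ((n:ℝ)-3)*((n:ℝ)-4)/2 * esymm (n - 1) 2 x + ((n:ℝ)-4) * esymm (n - 1) 3 x + esymm (n - 1) 4 x)) + (16*((n:ℝ)-4)*((n:ℝ)-5)*((n:ℝ)-3)) * esymm (n - 1) 2 κ + (-4*((n:ℝ)-1)*((n:ℝ)-2)*((n:ℝ)-3)*((n:ℝ)-4)*((n:ℝ)-5))) * hS4 + ((16*((n:ℝ)-4)*((n:ℝ)-5)*((n:ℝ)-3)) * (((n:ℝ)-1)*((n:ℝ)-2)*((n:ℝ)-3)*((n:ℝ)-4)/24 + ((n:ℝ)-2)*((n:ℝ)-3)*((n:ℝ)-4)/6 * esymm (n - 1) 1 x + ((n:ℝ)-3)*((n:ℝ)-4)/2 * esymm (n - 1) 2 x + ((n:ℝ)-4) * esymm (n - 1) 3 x + esymm (n - 1) 4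 x)) * hS2 + ((((n:ℝ)-2)*((n:ℝ)-3)*((n:ℝ)-4)^2*((n:ℝ)-5)) * (((n:ℝ)-1)*((n:ℝ)-2)*((n:ℝ)-3)/6 + ((n:ℝ)-2)*((n:ℝ)-3)/2 * esymm (n - 1) 1 x + ((n:ℝ)-3) * esymm (n - 1) 2 x + esymm (n - 1) 3 x)) * hS1
  have hEM : (4 * (n:ℝ)^6 + (-76) * (n:ℝ)^5 + 580 * (n:ℝ)^4 + (-2260) * (n:ℝ)^3 + 4696 * (n:ℝ)^2 + (-4864) * (n:ℝ) + 1920) * esymm (n - 1) 3 x + (16 * (n:ℝ)^5 + (-240) * (n:ℝ)^4 + 1360 * (n:ℝ)^3 + (-3600) * (n:ℝ)^2 + 4384 * (n:ℝ) + (-1920)) * esymm (n - 1) 4 x + (20 * (n:ℝ)^4 + (-200) * (n:ℝ)^3 + 700 * (n:ℝ)^2 + (-1000) * (n:ℝ) + 480) * esymm (n - 1) 5 x + ((-4/3) * (n:ℝ)^6 + 28 * (n:ℝ)^5 + (-724/3) * (n:ℝ)^4 + 1092 * (n:ℝ)^3 + (-8200/3) * (n:ℝ)^2 + 3584 * (n:ℝ)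 + (-1920)) * esymm (n - 1) 1 x * esymm (n - 1) 2 x + (8 * (n:ℝ)^5 + (-144) * (n:ℝ)^4 + 1016 * (n:ℝ)^3 + (-3504) * (n:ℝ)^2 + 5888 * (n:ℝ) + (-3840)) * esymm (n - 1) 1 x * esymm (n - 1) 3 x + (44 * (n:ℝ)^4 + (-616) * (n:ℝ)^3 + 3124 * (n:ℝ)^2 + (-6776) * (n:ℝ) + 5280) * esymm (n - 1) 1 x * esymm (n - 1) 4 x + (60 * (n:ℝ)^3 + (-540) * (n:ℝ)^2 + 1560 * (n:ℝ) + (-1440)) * esymm (n - 1) 1 x * esymm (n - 1) 5 x + ((-8) * (n:ℝ)^5 + 152 * (n:ℝ)^4 + (-1144) * (n:ℝ)^3 + 4264 * (n:ℝ)^2 + (-7872) * (n:ℝ) + 5760) * esymm (n - 1) 2 x * esymm (n - 1) 2 x + ((-24) * (n:ℝ)^4 + 384 * (n:ℝ)^3 + (-2280) * (n:ℝ)^2 + 5952 * (n:ℝ) + (-5760)) * esymm (n - 1) 2 x * esymm (n - 1) 3 x + (40 * (n:ℝ)^3 + (-480) * (n:ℝ)^2 + 1880 * (n:ℝ) + (-2400))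 * esymm (n - 1) 2 x * esymm (n - 1) 4 x + (120 * (n:ℝ)^2 + (-840) * (n:ℝ) + 1440) * esymm (n - 1) 2 x * esymm (n - 1) 5 x + ((-48) * (n:ℝ)^3 + 624 * (n:ℝ)^2 + (-2688) * (n:ℝ) + 3840) * esymm (n - 1) 3 x * esymm (n - 1) 3 x + ((-72) * (n:ℝ)^2 + 648 * (n:ℝ) + (-1440)) * esymm (n - 1) 3 x * esymm (n - 1) 4 x + (120 * (n:ℝ) + (-480)) * esymm (n - 1) 3 x * esymm (n - 1) 5 x + ((-96) * (n:ℝ) + 480) * esymm (n - 1) 4 x * esymm (n - 1) 4 x = (4/3) * ((n:ℝ)-2) * ((n:ℝ)-3) * ((n:ℝ)-4)^2 * ((n:ℝ)-5) * (6 * MM (n - 1) x 0 3 - 1 * ((n:ℝ) - 3) * MM (n - 1) x 1 1) + 8 * ((n:ℝ)-3)^2 * ((n:ℝ)-4) * ((n:ℝ)-5) * (12 * MM (n - 1) x 0 4 - 1 * ((n:ℝ) - 4) * MM (n - 1) x 1 2) + 4 * ((n:ℝ)-3) * ((n:ℝ)-4)^2 * ((n:ℝ)-5) * (2 * MM (n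 - 1) x 1 2 - 2 * ((n:ℝ) - 3) * MM (n - 1) x 2 0) + 4 * ((n:ℝ)-3) * ((n:ℝ)-4) * (7*(n:ℝ)-32) * (20 * MM (n - 1) x 0 5 - 1 * ((n:ℝ) - 5) * MM (n - 1) x 1 3) + 12 * ((n:ℝ)-3) * ((n:ℝ)-4) * ((n:ℝ)-5) * (6 * MM (n - 1) x 1 3 - 2 * ((n:ℝ) - 4) * MM (n - 1) x 2 1) + 4 * ((n:ℝ)-4) * (17*(n:ℝ)-67) * (30 * MM (n - 1) x 0 6 - 1 * ((n:ℝ) - 6) * MM (n - 1) x 1 4) + 4 * ((n:ℝ)-4) * (7*(n:ℝ)-29) * (12 * MM (n - 1) x 1 4 - 2 * ((n:ℝ) - 5) * MM (n - 1) x 2 2) + 16 * ((n:ℝ)-4) * ((n:ℝ)-5) * (2 * MM (n - 1) x 2 2 - 3 * ((n:ℝ) - 4) * MM (n - 1) x 3 0) + 120 * ((n:ℝ)-4) * (42 * MM (n - 1) x 0 7 - 1 * ((n:ℝ) - 7) * MM (n - 1) x 1 5) + 48 * ((n:ℝ)-4) * (20 * MM (n - 1) x 1 5 - 2 * ((n:ℝ)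 - 6) * MM (n - 1) x 2 3) + 24 * ((n:ℝ)-4) * (6 * MM (n - 1) x 2 3 - 3 * ((n:ℝ) - 5) * MM (n - 1) x 3 1) + (120:ℝ) * (56 * MM (n - 1) x 0 8 - 1 * ((n:ℝ) - 8) * MM (n - 1) x 1 6) + (48:ℝ) * (30 * MM (n - 1) x 1 6 - 2 * ((n:ℝ) - 7) * MM (n - 1) x 2 4) + (24:ℝ) * (12 * MM (n - 1) x 2 4 - 3 * ((n:ℝ) - 6) * MM (n - 1) x 3 2) + (24:ℝ) * (2 * MM (n - 1) x 3 2 - 4 * ((n:ℝ) - 5) * MM (n - 1) x 4 0) := by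
    linear_combination ((-4/3) * (n:ℝ)^6 + 28 * (n:ℝ)^5 + (-724/3) * (n:ℝ)^4 + 1092 * (n:ℝ)^3 + (-8200/3) * (n:ℝ)^2 + 3584 * (n:ℝ) + (-1920)) * hP12 + (8 * (n:ℝ)^5 + (-144) * (n:ℝ)^4 + 1016 * (n:ℝ)^3 + (-3504) * (n:ℝ)^2 + 5888 * (n:ℝ) + (-3840)) * hP13 + (44 * (n:ℝ)^4 + (-616) * (n:ℝ)^3 + 3124 * (n:ℝ)^2 + (-6776) * (n:ℝ) + 5280) * hP14 + (60 * (n:ℝ)^3 + (-540) * (n:ℝ)^2 + 1560 * (n:ℝ) + (-1440)) * hP15 + ((-8) * (n:ℝ)^5 + 152 * (n:ℝ)^4 + (-1144) * (n:ℝ)^3 + 4264 * (n:ℝ)^2 + (-7872) * (n:ℝ) + 5760) * hP22 + ((-24) * (n:ℝ)^4 + 384 * (n:ℝ)^3 + (-2280) * (n:ℝ)^2 + 5952 * (n:ℝ) + (-5760)) * hP23 + (40 * (n:ℝ)^3 + (-480) * (n:ℝ)^2 + 1880 * (n:ℝ) + (-2400)) * hP24 + (120 * (n:ℝ)^2 +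 (-840) * (n:ℝ) + 1440) * hP25 + ((-48) * (n:ℝ)^3 + 624 * (n:ℝ)^2 + (-2688) * (n:ℝ) + 3840) * hP33 + ((-72) * (n:ℝ)^2 + 648 * (n:ℝ) + (-1440)) * hP34 + (120 * (n:ℝ) + (-480)) * hP35 + ((-96) * (n:ℝ) + 480) * hP44 + (4 * (n:ℝ)^6 + (-76) * (n:ℝ)^5 + 580 * (n:ℝ)^4 + (-2260) * (n:ℝ)^3 + 4696 * (n:ℝ)^2 + (-4864) * (n:ℝ) + 1920) * hM03 + (16 * (n:ℝ)^5 + (-240) * (n:ℝ)^4 + 1360 * (n:ℝ)^3 + (-3600) * (n:ℝ)^2 + 4384 * (n:ℝ) + (-1920)) * hM04 + (20 * (n:ℝ)^4 + (-200) * (n:ℝ)^3 + 700 * (n:ℝ)^2 + (-1000) * (n:ℝ) + 480) * hM05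
  have hRle : (4/3) * ((n:ℝ)-2) * ((n:ℝ)-3) * ((n:ℝ)-4)^2 * ((n:ℝ)-5) * (6 * MM (n - 1) x 0 3 - 1 * ((n:ℝ) - 3) * MM (n - 1) x 1 1) + 8 * ((n:ℝ)-3)^2 * ((n:ℝ)-4) * ((n:ℝ)-5) * (12 * MM (n - 1) x 0 4 - 1 * ((n:ℝ) - 4) * MM (n - 1) x 1 2) + 4 * ((n:ℝ)-3) * ((n:ℝ)-4)^2 * ((n:ℝ)-5) * (2 * MM (n - 1) x 1 2 - 2 * ((n:ℝ) - 3) * MM (n - 1) x 2 0) + 4 * ((n:ℝ)-3) * ((n:ℝ)-4) * (7*(n:ℝ)-32) * (20 * MM (n - 1) x 0 5 - 1 * ((n:ℝ) - 5) * MM (n - 1) x 1 3) + 12 * ((n:ℝ)-3) * ((n:ℝ)-4) * ((n:ℝ)-5) * (6 * MM (n - 1) x 1 3 - 2 * ((n:ℝ) - 4) * MM (n - 1) x 2 1) + 4 * ((n:ℝ)-4) * (17*(n:ℝ)-67) * (30 * MM (n - 1) x 0 6 - 1 * ((n:ℝ) - 6) * MM (n - 1) x 1 4) + 4 * ((n:ℝ)-4)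 * (7*(n:ℝ)-29) * (12 * MM (n - 1) x 1 4 - 2 * ((n:ℝ) - 5) * MM (n - 1) x 2 2) + 16 * ((n:ℝ)-4) * ((n:ℝ)-5) * (2 * MM (n - 1) x 2 2 - 3 * ((n:ℝ) - 4) * MM (n - 1) x 3 0) + 120 * ((n:ℝ)-4) * (42 * MM (n - 1) x 0 7 - 1 * ((n:ℝ) - 7) * MM (n - 1) x 1 5) + 48 * ((n:ℝ)-4) * (20 * MM (n - 1) x 1 5 - 2 * ((n:ℝ) - 6) * MM (n - 1) x 2 3) + 24 * ((n:ℝ)-4) * (6 * MM (n - 1) x 2 3 - 3 * ((n:ℝ) - 5) * MM (n - 1) x 3 1) + (120:ℝ) * (56 * MM (n - 1) x 0 8 - 1 * ((n:ℝ) - 8) * MM (n - 1) x 1 6) + (48:ℝ) * (30 * MM (n - 1) x 1 6 - 2 * ((n:ℝ) - 7) * MM (n - 1) x 2 4) + (24:ℝ) * (12 * MM (n - 1) x 2 4 - 3 * ((n:ℝ) - 6) * MM (n - 1) x 3 2) + (24:ℝ) * (2 * MM (n - 1) x 3 2 - 4 * ((n:ℝ) - 5) * MM (n - 1) x 4 0)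 ≤ 0 := by
    exact add_nonpos (add_nonpos (add_nonpos (add_nonpos (add_nonpos (add_nonpos (add_nonpos (add_nonpos (add_nonpos (add_nonpos (add_nonpos (add_nonpos (add_nonpos (add_nonpos (hterm03) hterm04) hterm12) hterm05) hterm13) hterm06) hterm14) hterm22) hterm07) hterm15) hterm23) hterm08) hterm16) hterm24) hterm32
  have hQle : 120*((n:ℝ)-4) * esymm (n - 1) 3 κ * esymm (n - 1) 5 κ - 96*((n:ℝ)-5) * esymm (n - 1) 4 κ^2 + 16*((n:ℝ)-4)*((n:ℝ)-5)*((n:ℝ)-3) * esymm (n - 1) 2 κ * esymm (n - 1) 4 κ - 12*((n:ℝ)-4)^2*((n:ℝ)-5) * esymm (n - 1) 3 κ^2 + ((n:ℝ)-2)*((n:ℝ)-3)*((n:ℝ)-4)^2*((n:ℝ)-5) * esymm (n - 1) 1 κ * esymm (n - 1) 3 κ - 4*((n:ℝ)-1)*((n:ℝ)-2)*((n:ℝ)-3)*((n:ℝ)-4)*((n:ℝ)-5) * esymm (n - 1) 4 κ ≤ 0 := by rw [hQE, hEM]; exact hRle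
  have hA4 : 0 < esymm (n - 1) 4 κ := by
    rw [esymm]
    refine Finset.sum_pos (fun s hs => Finset.prod_pos fun i _ => lt_of_lt_of_le one_pos (hκ i)) ?_
    refine Finset.powersetCard_nonempty_of_le ?_
    rw [Finset.card_univ, Fintype.card_fin]; omega
  have hn4 : (0:ℝ) < (n:ℝ) - 4 := by linarith
  have hA4ne : esymm (n - 1) 4 κ ≠ 0 := ne_of_gt hA4
  have hn4ne : (n:ℝ) - 4 ≠ 0 := ne_of_gt hn4
  have hden : (0:ℝ) < 24 * ((n:ℝ) - 4) * esymm (n - 1) 4 κ := by positivity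
  have hgoal : (5 * esymm (n - 1) 5 κ * esymm (n - 1) 3 κ / esymm (n - 1) 4 κ
        - 4 * ((n : ℝ) - 5) / ((n : ℝ) - 4) * esymm (n - 1) 4 κ)
      + ((n : ℝ) - 4) * ((n : ℝ) - 5) / 6 *
        (4 * ((n : ℝ) - 3) / ((n : ℝ) - 4) * esymm (n - 1) 2 κ
          - 3 * (esymm (n - 1) 3 κ)^2 / esymm (n - 1) 4 κ)
      + ((n : ℝ) - 2) * ((n : ℝ) - 3) * ((n : ℝ) - 4) * ((n : ℝ) - 5) / 24 *
        (esymm (n - 1) 1 κ * esymm (n - 1) 3 κ / esymm (n - 1) 4 κ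
          - 4 * ((n : ℝ) - 1) / ((n : ℝ) - 4))
      = (120*((n:ℝ)-4) * esymm (n - 1) 3 κ * esymm (n - 1) 5 κ - 96*((n:ℝ)-5) * esymm (n - 1) 4 κ^2 + 16*((n:ℝ)-4)*((n:ℝ)-5)*((n:ℝ)-3) * esymm (n - 1) 2 κ * esymm (n - 1) 4 κ - 12*((n:ℝ)-4)^2*((n:ℝ)-5) * esymm (n - 1) 3 κ^2 + ((n:ℝ)-2)*((n:ℝ)-3)*((n:ℝ)-4)^2*((n:ℝ)-5) * esymm (n - 1) 1 κ * esymm (n - 1) 3 κ - 4*((n:ℝ)-1)*((n:ℝ)-2)*((n:ℝ)-3)*((n:ℝ)-4)*((n:ℝ)-5) * esymm (n - 1) 4 κ) / (24 * ((n:ℝ) - 4) * esymm (n - 1) 4 κ) := by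
    field_simp
    ring
  rw [hgoal]
  exact div_nonpos_iff.mpr (Or.inr ⟨hQle, le_of_lt hden⟩)
end

section
/- (Newton–MacLaurin inequality) Let Λ ∈ ℝ^{n−1} lie in the Garding cone Γ_k⁺, i.e., σⱼ(Λ) > 0 for all j ≤ k. Then σ_{k−1}(Λ)σ_{k+1}(Λ)/σ_k(Λ)² ≤ k(n−k−1)/((k+1)(n−k)), with equality if and only if Λ = c(1,…,1) for some c > 0. -/
namespace NMaux
open Polynomial


lemma esymm_cons (a : ℝ) (s : Multiset ℝ) (j : ℕ) :
    (a ::ₘ s).esymm (j + 1) = s.esymm (j + 1) + a * s.esymm j := by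
  simp only [Multiset.esymm, Multiset.powersetCard_cons, Multiset.map_add, Multiset.sum_add,
    Multiset.map_map, Function.comp_def, Multiset.prod_cons]
  rw [Multiset.sum_map_mul_left]

lemma esymm_gt_card {s : Multiset ℝ} {j : ℕ} (h : Multiset.card s < j) : s.esymm j = 0 := by
  obtain ⟨i, hi, rfl⟩ : ∃ i, 0 < i ∧ j = Multiset.card s + i :=
    ⟨j - Multiset.card s, by omega, by omega⟩
  rw [Multiset.esymm, Multiset.powersetCard_card_add s hi]
  rfl

lemma esymm_zero' (s : Multiset ℝ) : s.esymm 0 = 1 := by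
  simp [Multiset.esymm, Multiset.powersetCard_zero_left]

lemma esymm_card (s : Multiset ℝ) : s.esymm (Multiset.card s) = s.prod := by
  induction s using Multiset.induction with
  | empty => simp [esymm_zero']
  | cons a s ih =>
    rw [Multiset.card_cons, esymm_cons, esymm_gt_card (by omega), ih, Multiset.prod_cons, zero_add]

lemma esymm_card_sub_one (s : Multiset ℝ) (m : ℕ) (h0 : (0:ℝ) ∉ s)
    (hc : Multiset.card s = m + 1) :
    s.esymm m = s.prod * (s.map (·⁻¹)).sum := by
  induction s using Multiset.induction generalizing m with
  | empty => simp at hc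
  | cons a s ih =>
    have ha : a ≠ 0 := fun h => h0 (by simp [h])
    have h0s : (0:ℝ) ∉ s := fun h => h0 (Multiset.mem_cons_of_mem h)
    rw [Multiset.card_cons] at hc
    rcases Nat.eq_zero_or_pos m with rfl | hm
    · have : s = 0 := Multiset.card_eq_zero.mp (by omega)
      subst this
      simp [esymm_zero', mul_inv_cancel₀ ha]
    · obtain ⟨m', rfl⟩ := Nat.exists_eq_add_of_le hm
      rw [add_comm 1 m'] at *
      have hcs : Multiset.card s = m' + 1 := by omega
      have h1 : s.esymm (m' + 1) = s.prod := by rw [← hcs, esymm_card]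
      rw [esymm_cons, h1, ih m' h0s hcs, Multiset.prod_cons, Multiset.map_cons,
        Multiset.sum_cons]
      field_simp


lemma esymm_card_sub_two (s : Multiset ℝ) (m : ℕ) (h0 : (0:ℝ) ∉ s)
    (hc : Multiset.card s = m + 2) :
    2 * s.esymm m = s.prod * ((s.map (·⁻¹)).sum ^ 2 - (s.map (fun x => (x⁻¹)^2)).sum) := by
  induction s using Multiset.induction generalizing m with
  | empty => simp at hc
  | cons a s ih =>
    have ha : a ≠ 0 := fun h => h0 (by simp [h])
    have h0s : (0:ℝ) ∉ s := fun h => h0 (Multiset.mem_cons_of_mem h)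
    rw [Multiset.card_cons] at hc
    rcases Nat.eq_zero_or_pos m with rfl | hm
    · -- card s = 1
      obtain ⟨b, rfl⟩ := Multiset.card_eq_one.mp (by omega : Multiset.card s = 1)
      have hb : b ≠ 0 := fun h => h0s (by simp [h])
      simp only [esymm_zero', Multiset.prod_cons, Multiset.map_cons, Multiset.sum_cons,
        Multiset.prod_singleton, Multiset.map_singleton, Multiset.sum_singleton]
      field_simp
      ring
    · obtain ⟨m', rfl⟩ := Nat.exists_eq_add_of_le hm
      rw [add_comm 1 m'] at *
      have hcs : Multiset.card s = m' + 2 := by omega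
      have h1 : s.esymm (m' + 1) = s.prod * (s.map (·⁻¹)).sum :=
        esymm_card_sub_one s (m' + 1) h0s (by omega)
      have h2 := ih m' h0s hcs
      rw [esymm_cons, mul_add, h1, Multiset.prod_cons, Multiset.map_cons, Multiset.sum_cons,
        Multiset.map_cons, Multiset.sum_cons]
      have ha' : a⁻¹ * a = 1 := inv_mul_cancel₀ ha
      linear_combination a * h2 - 2 * s.prod * (Multiset.map (fun x => x⁻¹) s).sum * ha'

def AllEq (s : Multiset ℝ) : Prop := ∀ x ∈ s, ∀ y ∈ s, x = y

lemma multiset_cs (t : Multiset ℝ) :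
    t.sum ^ 2 ≤ (Multiset.card t : ℝ) * (t.map (· ^ 2)).sum ∧
    (t.sum ^ 2 = (Multiset.card t : ℝ) * (t.map (· ^ 2)).sum → AllEq t) := by
  induction t using Multiset.induction with
  | empty => simp [AllEq]
  | cons a t ih =>
    obtain ⟨ihle, iheq⟩ := ih
    rcases eq_or_ne t 0 with rfl | ht0
    · refine ⟨by simp, ?_⟩
      intro _ x hx y hy
      simp only [Multiset.mem_cons, Multiset.notMem_zero, or_false] at hx hy
      rw [hx, hy]
    · have hQ : 0 ≤ (t.map (· ^ 2)).sum :=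
        Multiset.sum_nonneg (by
          intro x hx
          obtain ⟨y, _, rfl⟩ := Multiset.mem_map.mp hx
          positivity)
      have hcpos : (0:ℝ) < (Multiset.card t : ℝ) :=
        Nat.cast_pos.mpr (Multiset.card_pos.mpr ht0)
      simp only [Multiset.sum_cons, Multiset.map_cons, Multiset.card_cons, Nat.cast_add,
        Nat.cast_one]
      set c := (Multiset.card t : ℝ) with hcdef
      set S := t.sum
      set Q := (t.map (· ^ 2)).sum
      constructor
      · nlinarith [sq_nonneg (c * a - S), hcpos, mul_nonneg (le_of_lt hcpos) hQ, ihle,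
          mul_nonneg (by linarith : (0:ℝ) ≤ c + 1) (by linarith : (0:ℝ) ≤ c * Q - S ^ 2)]
      · intro heq
        have h1 : S ^ 2 = c * Q ∧ c * a = S := by
          constructor <;> nlinarith [sq_nonneg (c * a - S), ihle]
        have hall := iheq h1.1
        have haq : ∀ x ∈ t, x = a := by
          intro x hx
          have hsum : S = c * x := by
            have hxy : ∀ y ∈ t, y = x := fun y hy => hall y hy x hx
            calc S = (t.map (fun _ => x)).sum := by
                  apply congrArg Multiset.sum
                  conv_lhs => rw [← Multiset.map_id t]
                  exact Multiset.map_congr rfl (by intro y hy; simp [hxy y hy])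
              _ = c * x := by rw [Multiset.map_const', Multiset.sum_replicate, nsmul_eq_mul]
          have hce : c * x = c * a := by rw [← hsum, ← h1.2]
          exact mul_left_cancel₀ (ne_of_gt hcpos) hce
        intro x hx y hy
        simp only [Multiset.mem_cons] at hx hy
        rcases hx with rfl | hx <;> rcases hy with rfl | hy
        · rfl
        · exact (haq y hy).symm
        · exact haq x hx
        · rw [haq x hx, haq y hy]

lemma deriv_facts {p : ℝ[X]} {d : ℕ} (hd : p.natDegree = d) (h1 : 1 ≤ d) :
    (Polynomial.derivative p).natDegree = d - 1 ∧
    (Polynomial.derivative p).leadingCoeff = d * p.leadingCoeff := by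
  have hp0 : p ≠ 0 := fun h => by simp [h] at hd; omega
  have hlc : p.leadingCoeff ≠ 0 := Polynomial.leadingCoeff_ne_zero.mpr hp0
  have hd1 : d - 1 + 1 = d := by omega
  have hcoeff : (Polynomial.derivative p).coeff (d - 1) = d * p.leadingCoeff := by
    rw [Polynomial.coeff_derivative, hd1, Polynomial.leadingCoeff, hd, mul_comm]
    congr 1
    rw [← hd1]
    push_cast
    ring
  have hne : (Polynomial.derivative p).coeff (d - 1) ≠ 0 := by
    rw [hcoeff]
    exact mul_ne_zero (by positivity) hlc
  have hle : (Polynomial.derivative p).natDegree ≤ d - 1 := by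
    have := Polynomial.natDegree_derivative_le p
    omega
  have hdeg : (Polynomial.derivative p).natDegree = d - 1 :=
    le_antisymm hle (Polynomial.le_natDegree_of_ne_zero hne)
  exact ⟨hdeg, by rw [Polynomial.leadingCoeff, hdeg, hcoeff]⟩

lemma deriv_roots {p : ℝ[X]} {d : ℕ} (hd : p.natDegree = d) (h1 : 1 ≤ d)
    (hr : Multiset.card p.roots = d) :
    Multiset.card (Polynomial.derivative p).roots = d - 1 := by
  have h2 := Polynomial.card_roots_le_derivative p
  have h3 := Polynomial.card_roots' (Polynomial.derivative p)
  have h4 := (deriv_facts hd h1).1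
  omega

lemma deriv_esymm {p : ℝ[X]} {d j : ℕ} (hd : p.natDegree = d) (h1 : 1 ≤ d)
    (hr : Multiset.card p.roots = d) (hj : j ≤ d - 1) :
    (d : ℝ) * (Polynomial.derivative p).roots.esymm j = ((d : ℝ) - j) * p.roots.esymm j := by
  have hp0 : p ≠ 0 := fun h => by simp [h] at hd; omega
  have hlc : p.leadingCoeff ≠ 0 := Polynomial.leadingCoeff_ne_zero.mpr hp0
  obtain ⟨hdeg, hlead⟩ := deriv_facts hd h1
  have hroots := deriv_roots hd h1 hr
  have hq1 : (Polynomial.derivative p).coeff (d - 1 - j) =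
      (Polynomial.derivative p).leadingCoeff * (-1) ^ j *
        (Polynomial.derivative p).roots.esymm j := by
    have h := Polynomial.coeff_eq_esymm_roots_of_card (hroots.trans hdeg.symm)
      (k := d - 1 - j) (by rw [hdeg]; omega)
    rw [hdeg] at h
    have hje : d - 1 - (d - 1 - j) = j := by omega
    rw [hje] at h
    exact h
  have hq2 : (Polynomial.derivative p).coeff (d - 1 - j) = p.coeff (d - j) * (d - j : ℕ) := by
    have hidx : d - 1 - j + 1 = d - j := by omega
    rw [Polynomial.coeff_derivative, hidx]
    congr 1
    have : ((d - 1 - j : ℕ) : ℝ) + 1 = ((d - 1 - j + 1 : ℕ) : ℝ) := by push_cast; ring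
    rw [this, hidx]
  have hp1 : p.coeff (d - j) = p.leadingCoeff * (-1) ^ j * p.roots.esymm j := by
    have h := Polynomial.coeff_eq_esymm_roots_of_card (hr.trans hd.symm) (k := d - j)
      (by rw [hd]; omega)
    rw [hd] at h
    have hje : d - (d - j) = j := by omega
    rw [hje] at h
    exact h
  have hcast : ((d - j : ℕ) : ℝ) = (d : ℝ) - j := Nat.cast_sub (by omega)
  have h5 : (Polynomial.derivative p).leadingCoeff * (-1) ^ j *
      (Polynomial.derivative p).roots.esymm j =
      p.leadingCoeff * (-1) ^ j * p.roots.esymm j * ((d : ℝ) - j) := by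
    rw [← hq1, hq2, hp1, hcast]
  rw [hlead] at h5
  apply mul_left_cancel₀ (a := p.leadingCoeff * (-1) ^ j)
    (mul_ne_zero hlc (pow_ne_zero _ (by norm_num)))
  linear_combination h5

lemma simple_roots_of_a {p : ℝ[X]} {d : ℕ} (hd : p.natDegree = d) (h3 : 3 ≤ d)
    (hr : Multiset.card p.roots = d) {lc r a : ℝ} (hlc : lc ≠ 0)
    (hp : p = Polynomial.C lc * (X - Polynomial.C r) ^ d + Polynomial.C a) :
    a = 0 := by
  by_contra ha
  have hp0 : p ≠ 0 := fun h => by rw [h] at hd; simp at hd; omega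
  have heval : ∀ x, p.eval x = lc * (x - r) ^ d + a := by
    intro x; simp [hp]
  have hpr : ¬ p.IsRoot r := by
    simp only [Polynomial.IsRoot, heval, sub_self, zero_pow (by omega : d ≠ 0), mul_zero,
      zero_add]
    exact ha
  have hderiv : ∀ x, (Polynomial.derivative p).eval x = lc * d * (x - r) ^ (d - 1) := by
    intro x
    rw [hp]
    simp only [Polynomial.derivative_add, Polynomial.derivative_C, add_zero,
      Polynomial.derivative_C_mul, Polynomial.derivative_pow, Polynomial.derivative_X_sub_C,
      mul_one, Polynomial.eval_mul, Polynomial.eval_C, Polynomial.eval_pow,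
      Polynomial.eval_sub, Polynomial.eval_X, Polynomial.eval_natCast]
    ring
  have hxr : ∀ x ∈ p.roots, (x - r) ^ d = -a / lc := by
    intro x hx
    have hx0 : p.eval x = 0 := (Polynomial.mem_roots hp0).mp hx
    rw [heval] at hx0
    field_simp
    linarith
  have habs : ∀ x ∈ p.roots, ∀ y ∈ p.roots, x = y ∨ x = 2 * r - y := by
    intro x hx y hy
    have h1 : |x - r| ^ d = |y - r| ^ d := by
      rw [← abs_pow, ← abs_pow, hxr x hx, hxr y hy]
    have h2 : |x - r| = |y - r| :=
      (pow_left_inj₀ (abs_nonneg _) (abs_nonneg _) (by omega : d ≠ 0)).mp h1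
    rcases abs_eq_abs.mp h2 with h | h
    · left; linarith
    · right; linarith
  have hsimple : ∀ x ∈ p.roots, p.rootMultiplicity x = 1 := by
    intro x hx
    have hxroot : p.IsRoot x := (Polynomial.mem_roots hp0).mp hx
    have hxner : x ≠ r := fun h => hpr (h ▸ hxroot)
    refine le_antisymm ?_ ((Polynomial.rootMultiplicity_pos hp0).mpr hxroot)
    by_contra hge
    have h2 : 2 ≤ p.rootMultiplicity x := by omega
    have hdvd : (X - Polynomial.C x) ^ 2 ∣ p :=
      (pow_dvd_pow _ h2).trans (Polynomial.pow_rootMultiplicity_dvd p x)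
    obtain ⟨u, hu⟩ := hdvd
    have : (Polynomial.derivative p).eval x = 0 := by
      rw [hu]
      simp [Polynomial.derivative_mul, Polynomial.derivative_pow]
    rw [hderiv x] at this
    have : (x - r) ^ (d - 1) = 0 := by
      rcases mul_eq_zero.mp this with h | h
      · exact absurd h (by positivity)
      · exact h
    exact hxner (by have := pow_eq_zero_iff (by omega : d - 1 ≠ 0) |>.mp this; linarith)
  obtain ⟨x₀, hx₀⟩ : ∃ x, x ∈ p.roots := by
    apply Multiset.exists_mem_of_ne_zero
    intro h
    rw [h] at hr; simp at hr; omega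
  have hsub : p.roots.toFinset ⊆ {x₀, 2 * r - x₀} := by
    intro x hx
    have hx' := Multiset.mem_toFinset.mp hx
    rcases habs x hx' x₀ hx₀ with h | h
    · simp [h]
    · simp [h]
  have hcard2 : p.roots.toFinset.card ≤ 2 := by
    calc p.roots.toFinset.card ≤ ({x₀, 2 * r - x₀} : Finset ℝ).card := Finset.card_le_card hsub
      _ ≤ 2 := Finset.card_insert_le _ _ |>.trans (by simp)
  have hcount : Multiset.card p.roots = p.roots.toFinset.card := by
    rw [← Multiset.toFinset_sum_count_eq]
    rw [Finset.card_eq_sum_ones]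
    apply Finset.sum_congr rfl
    intro x hx
    rw [Polynomial.count_roots]
    exact hsimple x (Multiset.mem_toFinset.mp hx)
  omega

lemma lemE {p : ℝ[X]} {d : ℕ} (hd : p.natDegree = d) (h3 : 3 ≤ d)
    (hr : Multiset.card p.roots = d) (hq : AllEq (Polynomial.derivative p).roots) :
    AllEq p.roots := by
  have hp0 : p ≠ 0 := fun h => by rw [h] at hd; simp at hd; omega
  have hlc : p.leadingCoeff ≠ 0 := Polynomial.leadingCoeff_ne_zero.mpr hp0
  obtain ⟨hdeg, hlead⟩ := deriv_facts hd (by omega)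
  have hroots := deriv_roots hd (by omega) hr
  obtain ⟨r₀, hr₀⟩ : ∃ x, x ∈ (Polynomial.derivative p).roots := by
    apply Multiset.exists_mem_of_ne_zero
    intro h
    rw [h] at hroots; simp at hroots; omega
  have hrep : (Polynomial.derivative p).roots = Multiset.replicate (d - 1) r₀ :=
    Multiset.eq_replicate.mpr ⟨hroots, fun b hb => hq b hb r₀ hr₀⟩
  have hqfact : Polynomial.derivative p =
      Polynomial.C ((d : ℝ) * p.leadingCoeff) * (X - Polynomial.C r₀) ^ (d - 1) := by
    have h := Polynomial.C_leadingCoeff_mul_prod_multiset_X_sub_C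
      (p := Polynomial.derivative p) (hroots.trans hdeg.symm)
    rw [← h, hrep, hlead]
    rw [Multiset.map_replicate, Multiset.prod_replicate]
  set g : ℝ[X] := Polynomial.C p.leadingCoeff * (X - Polynomial.C r₀) ^ d with hgdef
  have hg : Polynomial.derivative g = Polynomial.derivative p := by
    rw [hqfact, hgdef]
    rw [Polynomial.derivative_C_mul, Polynomial.derivative_pow, Polynomial.derivative_X_sub_C]
    rw [Polynomial.C_mul]
    rw [Polynomial.C_eq_natCast]
    ring
  have hsub0 : Polynomial.derivative (p - g) = 0 := by
    rw [Polynomial.derivative_sub, hg, sub_self]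
  have hC : p - g = Polynomial.C ((p - g).coeff 0) := Polynomial.eq_C_of_derivative_eq_zero hsub0
  have hpform : p = Polynomial.C p.leadingCoeff * (X - Polynomial.C r₀) ^ d +
      Polynomial.C ((p - g).coeff 0) := by
    rw [← hC, hgdef]; ring
  have ha0 : (p - g).coeff 0 = 0 := simple_roots_of_a hd h3 hr hlc hpform
  rw [ha0] at hpform
  have hproots : p.roots = Multiset.replicate d r₀ := by
    rw [hpform]
    simp only [map_zero, add_zero]
    rw [Polynomial.roots_C_mul _ hlc, Polynomial.roots_pow, Polynomial.roots_X_sub_C]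
    rw [Multiset.nsmul_singleton]
  intro x hx y hy
  rw [hproots] at hx hy
  rw [Multiset.eq_of_mem_replicate hx, Multiset.eq_of_mem_replicate hy]

lemma newton_poly (k : ℕ) (hk : 1 ≤ k) :
    ∀ d : ℕ, k + 1 ≤ d → ∀ p : ℝ[X], p.natDegree = d → Multiset.card p.roots = d →
      (((k:ℝ)+1) * ((d:ℝ) - k + 1) * (p.roots.esymm (k-1) * p.roots.esymm (k+1)) ≤
        (k:ℝ) * ((d:ℝ) - k) * p.roots.esymm k ^ 2) ∧
      (((k:ℝ)+1) * ((d:ℝ) - k + 1) * (p.roots.esymm (k-1) * p.roots.esymm (k+1)) =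
        (k:ℝ) * ((d:ℝ) - k) * p.roots.esymm k ^ 2 →
        p.roots.esymm k ≠ 0 → AllEq p.roots) := by
  intro d hd
  induction d, hd using Nat.le_induction with
  | base =>
    intro p hdeg hcard
    set s := p.roots with hs
    have hcards : Multiset.card s = k + 1 := hcard
    have hek1 : s.esymm (k+1) = s.prod := by rw [← hcards, esymm_card]
    have hc1 : ((k+1:ℕ):ℝ) - k + 1 = 2 := by push_cast; ring
    have hc2 : ((k+1:ℕ):ℝ) - k = 1 := by push_cast; ring
    rw [hc1, hc2, hek1]
    rcases eq_or_ne s.prod 0 with hprod | hprod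
    · rw [hprod]
      constructor
      · have hz : ((k:ℝ)+1) * 2 * (s.esymm (k-1) * 0) = 0 := by ring
        rw [hz]
        positivity
      · intro heq hek
        exfalso
        apply hek
        have h0 : (k:ℝ) * 1 * s.esymm k ^ 2 = 0 := by rw [← heq]; ring
        have hkpos : (0:ℝ) < k := by exact_mod_cast hk
        have h1 : s.esymm k ^ 2 = 0 := by
          rcases mul_eq_zero.mp h0 with h | h
          · exact absurd h (by positivity)
          · exact h
        exact pow_eq_zero_iff (by norm_num : 2 ≠ 0) |>.mp h1
    · have h0s : (0:ℝ) ∉ s := fun h => hprod (Multiset.prod_eq_zero h)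
      set t := s.map (·⁻¹) with ht
      set T := t.sum with hT
      set Q := (s.map (fun x => (x⁻¹)^2)).sum with hQ
      have htq : (t.map (· ^ 2)).sum = Q := by
        rw [ht, Multiset.map_map]
        rfl
      have hcardt : (Multiset.card t : ℝ) = (k:ℝ) + 1 := by
        rw [ht, Multiset.card_map, hcards]; push_cast; ring
      obtain ⟨hcs, hcseq⟩ := multiset_cs t
      rw [htq, hcardt] at hcs hcseq
      have hB1 : s.esymm k = s.prod * T := esymm_card_sub_one s k h0s hcards
      have hB2 : 2 * s.esymm (k-1) = s.prod * (T ^ 2 - Q) :=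
        esymm_card_sub_two s (k-1) h0s (by omega)
      have hek2 : s.esymm k ^ 2 = s.prod ^ 2 * T ^ 2 := by rw [hB1]; ring
      have hB2' : 2 * (s.esymm (k-1) * s.prod) = s.prod ^ 2 * (T ^ 2 - Q) := by
        linear_combination s.prod * hB2
      have hB2k : (k:ℝ) * (2 * (s.esymm (k-1) * s.prod)) = (k:ℝ) * (s.prod ^ 2 * (T ^ 2 - Q)) :=
        by rw [hB2']
      have hek2k : (k:ℝ) * s.esymm k ^ 2 = (k:ℝ) * (s.prod ^ 2 * T ^ 2) := by rw [hek2]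
      have hcsT : T ^ 2 ≤ ((k:ℝ) + 1) * Q := hcs
      have hint : 0 ≤ s.prod ^ 2 * (((k:ℝ)+1) * Q - T ^ 2) :=
        mul_nonneg (sq_nonneg _) (by linarith)
      have hintk : 0 ≤ (k:ℝ) * (s.prod ^ 2 * (((k:ℝ)+1) * Q - T ^ 2)) :=
        mul_nonneg (by positivity) hint
      constructor
      · linarith [hek2, hB2', hB2k, hek2k, hint, hintk]
      · intro heq hek
        have hP2 : s.prod ^ 2 * (T ^ 2 - ((k:ℝ)+1) * Q) = 0 := by
          linear_combination heq - ((k:ℝ)+1) * hB2' + (k:ℝ) * hek2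
        have hTQ : T ^ 2 = ((k:ℝ)+1) * Q := by
          rcases mul_eq_zero.mp hP2 with h | h
          · exact absurd h (pow_ne_zero _ hprod)
          · linarith [sub_eq_zero.mp h]
        have hallt := hcseq hTQ
        intro x hx y hy
        have hxt : x⁻¹ ∈ t := Multiset.mem_map_of_mem _ hx
        have hyt : y⁻¹ ∈ t := Multiset.mem_map_of_mem _ hy
        have hxy := hallt _ hxt _ hyt
        rw [← inv_inv x, hxy, inv_inv]
  | succ d hd ih =>
    intro p hdeg hcard
    have h1d : 1 ≤ d + 1 := by omega
    have hqdeg : (Polynomial.derivative p).natDegree = d := by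
      have := (deriv_facts hdeg h1d).1; simpa using this
    have hqcard : Multiset.card (Polynomial.derivative p).roots = d := by
      simpa using deriv_roots hdeg h1d hcard
    set a' := (Polynomial.derivative p).roots.esymm (k-1) with ha'd
    set b' := (Polynomial.derivative p).roots.esymm k with hb'd
    set c' := (Polynomial.derivative p).roots.esymm (k+1) with hc'd
    set a := p.roots.esymm (k-1) with had
    set b := p.roots.esymm k with hbd
    set c := p.roots.esymm (k+1) with hcd
    obtain ⟨ihle, iheq⟩ := ih (Polynomial.derivative p) hqdeg hqcard
    have hDK : (k:ℝ) + 1 ≤ (d:ℝ) := by exact_mod_cast hd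
    have hK1 : (1:ℝ) ≤ (k:ℝ) := by exact_mod_cast hk
    have hkm1 : ((k-1:ℕ):ℝ) = (k:ℝ) - 1 := by rw [Nat.cast_sub hk, Nat.cast_one]
    have E1 : ((d:ℝ)+1) * a' = ((d:ℝ)+2-(k:ℝ)) * a := by
      have h := deriv_esymm hdeg h1d hcard (j := k-1) (by omega)
      rw [ha'd, had]
      push_cast [hkm1] at h
      linarith [h]
    have E2 : ((d:ℝ)+1) * b' = ((d:ℝ)+1-(k:ℝ)) * b := by
      have h := deriv_esymm hdeg h1d hcard (j := k) (by omega)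
      rw [hb'd, hbd]
      push_cast at h
      linarith [h]
    have E3 : ((d:ℝ)+1) * c' = ((d:ℝ)-(k:ℝ)) * c := by
      have h := deriv_esymm hdeg h1d hcard (j := k+1) (by omega)
      rw [hc'd, hcd]
      push_cast at h
      linarith [h]
    have hfactor : (0:ℝ) < ((d:ℝ)-(k:ℝ))*((d:ℝ)-(k:ℝ)+1) := by nlinarith
    constructor
    · push_cast
      have h2 := mul_le_mul_of_nonneg_left ihle (sq_nonneg ((d:ℝ)+1))
      have h3 : ((k:ℝ)+1)*((d:ℝ)-(k:ℝ)+1)*((((d:ℝ)+2-(k:ℝ))*a)*(((d:ℝ)-(k:ℝ))*c)) ≤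
          (k:ℝ)*((d:ℝ)-(k:ℝ))*((((d:ℝ)+1-(k:ℝ)))*b)^2 := by
        calc ((k:ℝ)+1)*((d:ℝ)-(k:ℝ)+1)*((((d:ℝ)+2-(k:ℝ))*a)*(((d:ℝ)-(k:ℝ))*c))
            = ((k:ℝ)+1)*((d:ℝ)-(k:ℝ)+1)*((((d:ℝ)+1)*a')*(((d:ℝ)+1)*c')) := by rw [E1, E3]
          _ = ((d:ℝ)+1)^2 * (((k:ℝ)+1)*((d:ℝ)-(k:ℝ)+1)*(a'*c')) := by ring
          _ ≤ ((d:ℝ)+1)^2 * ((k:ℝ)*((d:ℝ)-(k:ℝ))*b'^2) := h2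
          _ = (k:ℝ)*((d:ℝ)-(k:ℝ))*(((d:ℝ)+1)*b')^2 := by ring
          _ = (k:ℝ)*((d:ℝ)-(k:ℝ))*((((d:ℝ)+1-(k:ℝ)))*b)^2 := by rw [E2]
      refine le_of_mul_le_mul_left ?_ hfactor
      calc ((d:ℝ)-(k:ℝ))*((d:ℝ)-(k:ℝ)+1) * (((k:ℝ)+1)*((d:ℝ)+1-(k:ℝ)+1)*(a*c))
          = ((k:ℝ)+1)*((d:ℝ)-(k:ℝ)+1)*((((d:ℝ)+2-(k:ℝ))*a)*(((d:ℝ)-(k:ℝ))*c)) := by ring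
        _ ≤ (k:ℝ)*((d:ℝ)-(k:ℝ))*((((d:ℝ)+1-(k:ℝ)))*b)^2 := h3
        _ = ((d:ℝ)-(k:ℝ))*((d:ℝ)-(k:ℝ)+1) * ((k:ℝ)*((d:ℝ)+1-(k:ℝ))*b^2) := by ring
    · intro heq hbne
      push_cast at heq
      have hb'ne : b' ≠ 0 := by
        intro hb0
        have : ((d:ℝ)+1-(k:ℝ)) * b = 0 := by rw [← E2, hb0, mul_zero]
        rcases mul_eq_zero.mp this with h | h
        · linarith
        · exact hbne h
      have heq' : ((k:ℝ)+1) * ((d:ℝ)-(k:ℝ)+1) * (a'*c') = (k:ℝ) * ((d:ℝ)-(k:ℝ)) * b'^2 := by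
        apply mul_left_cancel₀ (a := ((d:ℝ)+1)^2) (by positivity)
        calc ((d:ℝ)+1)^2 * (((k:ℝ)+1)*((d:ℝ)-(k:ℝ)+1)*(a'*c'))
            = ((k:ℝ)+1)*((d:ℝ)-(k:ℝ)+1)*((((d:ℝ)+1)*a')*(((d:ℝ)+1)*c')) := by ring
          _ = ((k:ℝ)+1)*((d:ℝ)-(k:ℝ)+1)*((((d:ℝ)+2-(k:ℝ))*a)*(((d:ℝ)-(k:ℝ))*c)) := by
              rw [E1, E3]
          _ = ((d:ℝ)-(k:ℝ))*((d:ℝ)-(k:ℝ)+1)*(((k:ℝ)+1)*((d:ℝ)+1-(k:ℝ)+1)*(a*c)) := by ring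
          _ = ((d:ℝ)-(k:ℝ))*((d:ℝ)-(k:ℝ)+1)*((k:ℝ)*((d:ℝ)+1-(k:ℝ))*b^2) := by rw [heq]
          _ = (k:ℝ)*((d:ℝ)-(k:ℝ))*((((d:ℝ)+1-(k:ℝ)))*b)^2 := by ring
          _ = (k:ℝ)*((d:ℝ)-(k:ℝ))*(((d:ℝ)+1)*b')^2 := by rw [E2]
          _ = ((d:ℝ)+1)^2 * ((k:ℝ)*((d:ℝ)-(k:ℝ))*b'^2) := by ring
      have hq := iheq heq' hb'ne
      exact lemE hdeg (by omega) hcard hq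


end NMaux

open Polynomial in
lemma esymm_const (m j : ℕ) (c : ℝ) (f : Fin m → ℝ) (hf : ∀ i, f i = c) :
    esymm m j f = (m.choose j) * c ^ j := by
  unfold _root_.esymm
  have hterm : ∀ s ∈ Finset.powersetCard j (Finset.univ : Finset (Fin m)),
      ∏ i ∈ s, f i = c ^ j := by
    intro s hs
    obtain ⟨-, hcard⟩ := Finset.mem_powersetCard.mp hs
    rw [Finset.prod_congr rfl (fun i _ => hf i), Finset.prod_const, hcard]
  rw [Finset.sum_congr rfl hterm, Finset.sum_const, Finset.card_powersetCard, Finset.card_univ,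
    Fintype.card_fin, nsmul_eq_mul]

open Polynomial in
theorem stmt14 (n k : ℕ) (hk : 1 ≤ k) (hk' : k ≤ n - 2) (Λ : Fin (n - 1) → ℝ)
    (hΓ : ∀ j, 1 ≤ j → j ≤ k → 0 < esymm (n - 1) j Λ) :
    esymm (n - 1) (k - 1) Λ * esymm (n - 1) (k + 1) Λ / (esymm (n - 1) k Λ)^2 ≤
      (k : ℝ) * ((n : ℝ) - (k : ℝ) - 1) / (((k : ℝ) + 1) * ((n : ℝ) - (k : ℝ))) ∧
    (esymm (n - 1) (k - 1) Λ * esymm (n - 1) (k + 1) Λ / (esymm (n - 1) k Λ)^2 =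
        (k : ℝ) * ((n : ℝ) - (k : ℝ) - 1) / (((k : ℝ) + 1) * ((n : ℝ) - (k : ℝ))) ↔
      ∃ c : ℝ, 0 < c ∧ ∀ i, Λ i = c) := by
  have hn : k + 2 ≤ n := by omega
  have hkm : k + 1 ≤ n - 1 := by omega
  have hkm' : k ≤ n - 1 := by omega
  have hmr : ((n - 1 : ℕ):ℝ) = (n:ℝ) - 1 := by
    rw [Nat.cast_sub (by omega), Nat.cast_one]
  have hnk : (k:ℝ) + 2 ≤ (n:ℝ) := by exact_mod_cast hn
  have hkr : (1:ℝ) ≤ (k:ℝ) := by exact_mod_cast hk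
  set s : Multiset ℝ := Finset.univ.val.map (fun i : Fin (n - 1) => -Λ i) with hsdef
  set p : ℝ[X] := (s.map (fun a => X - Polynomial.C a)).prod with hpdef
  have hcard_s : Multiset.card s = n - 1 := by simp [hsdef]
  have hdeg : p.natDegree = n - 1 := by
    rw [hpdef, Polynomial.natDegree_multiset_prod_X_sub_C_eq_card, hcard_s]
  have hroots : p.roots = s := Polynomial.roots_multiset_prod_X_sub_C s
  have hcardroots : Multiset.card p.roots = n - 1 := by rw [hroots]; exact hcard_s
  have hsj : ∀ j, s.esymm j = (-1:ℝ)^j * esymm (n - 1) j Λ := by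
    intro j
    have hmap : s = Multiset.map Neg.neg (Finset.univ.val.map Λ) := by
      rw [hsdef, Multiset.map_map]; rfl
    rw [hmap, Multiset.esymm_neg, Finset.esymm_map_val]
    rfl
  have hsign : ((-1:ℝ))^(k-1) * (-1:ℝ)^(k+1) = 1 := by
    rw [← pow_add, show k-1+(k+1) = 2*k from by omega, pow_mul]
    norm_num
  have hsign2 : ((-1:ℝ)^k)^2 = 1 := by
    rw [← pow_mul, mul_comm, pow_mul]
    norm_num
  have hprod_sign : s.esymm (k-1) * s.esymm (k+1) =
      esymm (n - 1) (k-1) Λ * esymm (n - 1) (k+1) Λ := by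
    rw [hsj (k-1), hsj (k+1)]
    linear_combination (esymm (n - 1) (k-1) Λ * esymm (n - 1) (k+1) Λ) * hsign
  have hsq_sign : s.esymm k ^ 2 = esymm (n - 1) k Λ ^ 2 := by
    rw [hsj k, mul_pow, hsign2, one_mul]
  have hσk : 0 < esymm (n - 1) k Λ := hΓ k hk le_rfl
  have hek_ne : s.esymm k ≠ 0 := by
    rw [hsj k]
    exact mul_ne_zero (pow_ne_zero _ (by norm_num)) (ne_of_gt hσk)
  obtain ⟨hle, heqc⟩ := NMaux.newton_poly k hk (n - 1) hkm p hdeg hcardroots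
  rw [hroots] at hle heqc
  have hc1 : ((n - 1 : ℕ):ℝ) - k + 1 = (n:ℝ) - k := by rw [hmr]; ring
  have hc2 : ((n - 1 : ℕ):ℝ) - k = (n:ℝ) - k - 1 := by rw [hmr]; ring
  rw [hprod_sign, hsq_sign, hc1, hc2] at hle heqc
  have hpos1 : (0:ℝ) < esymm (n - 1) k Λ ^ 2 := by positivity
  have hpos2 : (0:ℝ) < ((k:ℝ) + 1) * ((n:ℝ) - k) := by nlinarith
  constructor
  · rw [div_le_div_iff₀ hpos1 hpos2]
    linarith [hle]
  · constructor
    · -- equality → constant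
      intro heqdiv
      rw [div_eq_div_iff (ne_of_gt hpos1) (ne_of_gt hpos2)] at heqdiv
      have heqe : ((k:ℝ)+1) * ((n:ℝ) - k) * (esymm (n - 1) (k-1) Λ * esymm (n - 1) (k+1) Λ) =
          (k:ℝ) * ((n:ℝ) - k - 1) * esymm (n - 1) k Λ ^ 2 := by linarith [heqdiv]
      have hAE := heqc heqe hek_ne
      have hm0 : 0 < n - 1 := by omega
      have hconst : ∀ i, Λ i = Λ ⟨0, hm0⟩ := by
        intro i
        have h1 : -Λ i ∈ s := by
          rw [hsdef]
          exact Multiset.mem_map_of_mem _ (by simp)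
        have h2 : -Λ (⟨0, hm0⟩ : Fin (n - 1)) ∈ s := by
          rw [hsdef]
          exact Multiset.mem_map_of_mem _ (by simp)
        have := hAE _ h1 _ h2
        exact neg_inj.mp this
      refine ⟨Λ ⟨0, hm0⟩, ?_, hconst⟩
      have hσ1 : 0 < esymm (n - 1) 1 Λ := hΓ 1 le_rfl hk
      rw [esymm_const (n - 1) 1 (Λ ⟨0, hm0⟩) Λ hconst, Nat.choose_one_right, pow_one] at hσ1
      have hmpos : (0:ℝ) < ((n - 1 : ℕ):ℝ) := by exact_mod_cast hm0
      nlinarith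
    · -- constant → equality
      rintro ⟨c, hc0, hcl⟩
      have hidn1 : (((n-1).choose (k+1)):ℝ) * ((k:ℝ)+1) =
          ((n-1).choose k) * (((n - 1 : ℕ):ℝ) - k) := by
        have h := Nat.choose_succ_right_eq (n-1) k
        have hcast : (((n-1).choose (k+1) * (k+1) : ℕ) : ℝ) =
            (((n-1).choose k * (n - 1 - k) : ℕ) : ℝ) := by exact_mod_cast h
        push_cast [Nat.cast_sub hkm'] at hcast
        linarith [hcast]
      have hidn2 : (((n-1).choose k):ℝ) * (k:ℝ) =
          ((n-1).choose (k-1)) * (((n - 1 : ℕ):ℝ) - k + 1) := by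
        have h := Nat.choose_succ_right_eq (n-1) (k-1)
        rw [Nat.sub_add_cancel hk] at h
        have h2 : (n-1).choose k * k = (n-1).choose (k-1) * (n - 1 - k + 1) := by
          rw [h]; congr 1; omega
        have hcast : (((n-1).choose k * k : ℕ) : ℝ) =
            (((n-1).choose (k-1) * (n - 1 - k + 1) : ℕ) : ℝ) := by exact_mod_cast h2
        push_cast [Nat.cast_sub hkm'] at hcast
        linarith [hcast]
      have key : (((n-1).choose (k-1)):ℝ) * ((n-1).choose (k+1)) *
            (((k:ℝ)+1) * ((n:ℝ) - k)) =
          (((n-1).choose k):ℝ)^2 * ((k:ℝ) * ((n:ℝ) - k - 1)) := by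
        rw [hmr] at hidn1 hidn2
        linear_combination (-((((n-1).choose (k+1)):ℝ) * ((k:ℝ)+1))) * hidn2 +
          ((((n-1).choose k):ℝ) * (k:ℝ)) * hidn1
      rw [esymm_const (n-1) (k-1) c Λ hcl, esymm_const (n-1) (k+1) c Λ hcl,
        esymm_const (n-1) k c Λ hcl]
      have hchoosek : (0:ℝ) < ((n-1).choose k : ℝ) := by exact_mod_cast Nat.choose_pos hkm'
      have hden : (((n-1).choose k : ℝ) * c ^ k) ^ 2 ≠ 0 := by positivity
      rw [div_eq_div_iff hden (ne_of_gt hpos2)]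
      have hpow : c^(k-1) * c^(k+1) = (c^k)^2 := by
        rw [← pow_add, ← pow_mul]
        congr 1
        omega
      linear_combination ((c^k)^2) * key +
        ((((n-1).choose (k-1)):ℝ) * (((n-1).choose (k+1)):ℝ) *
          (((k:ℝ)+1) * ((n:ℝ) - k))) * hpow
end

section
/- For four real numbers κ₁,κ₂,κ₃,κ₄ satisfying κᵢκⱼ ≥ 1 for all i ≠ j, with p₁=σ₁/4, p₂=σ₂/6, p₃=σ₃/4, p₄=σ₄, one has 3(p₂p₄ − p₃²) + p₁p₃ − p₄ ≤ 0. -/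
theorem stmt18 (a b c d : ℝ)
    (hab : 1 ≤ a * b) (hac : 1 ≤ a * c) (had : 1 ≤ a * d)
    (hbc : 1 ≤ b * c) (hbd : 1 ≤ b * d) (hcd : 1 ≤ c * d) :
    3 * (((a*b + a*c + a*d + b*c + b*d + c*d) / 6) * (a*b*c*d) - ((a*b*c + a*b*d + a*c*d + b*c*d) / 4)^2)
      + ((a + b + c + d) / 4) * ((a*b*c + a*b*d + a*c*d + b*c*d) / 4) - (a*b*c*d) ≤ 0 := by
  have h1 : 0 ≤ (a*b) * ((a*b - 1) * (c - d)^2) :=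
    mul_nonneg (le_trans zero_le_one hab)
      (mul_nonneg (by linarith) (sq_nonneg _))
  have h2 : 0 ≤ (a*c) * ((a*c - 1) * (b - d)^2) :=
    mul_nonneg (le_trans zero_le_one hac)
      (mul_nonneg (by linarith) (sq_nonneg _))
  have h3 : 0 ≤ (a*d) * ((a*d - 1) * (b - c)^2) :=
    mul_nonneg (le_trans zero_le_one had)
      (mul_nonneg (by linarith) (sq_nonneg _))
  have h4 : 0 ≤ (b*c) * ((b*c - 1) * (a - d)^2) :=
    mul_nonneg (le_trans zero_le_one hbc)
      (mul_nonneg (by linarith) (sq_nonneg _))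
  have h5 : 0 ≤ (b*d) * ((b*d - 1) * (a - c)^2) :=
    mul_nonneg (le_trans zero_le_one hbd)
      (mul_nonneg (by linarith) (sq_nonneg _))
  have h6 : 0 ≤ (c*d) * ((c*d - 1) * (a - b)^2) :=
    mul_nonneg (le_trans zero_le_one hcd)
      (mul_nonneg (by linarith) (sq_nonneg _))
  nlinarith [h1, h2, h3, h4, h5, h6]
end
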